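/- arXiv:1503.01575 — 6 statements merged into one kernel-verified Lean document; each statement's English description precedes it below -/
import Mathlib

section
/- Let H be an n×n Hermitian matrix with distinct eigenvalues τ_1 < ⋯ < τ_s and corresponding main angles β_1, …, β_s, let a be a complex number, let J be the n×n all-ones matrix, and set M = H + aJ. Then for every complex number x which is not an eigenvalue of H, the characteristic polynomials P_M(x) = det(xI − M) and P_H(x) = det(xI − H) satisfy P_M(x) = P_H(x)·(1 + a·Σ_{i=1}^s n β_i²/(τ_i − x)). -/
open Matrix
open scoped Classical

noncomputable def eigSp {V : Type*} [Fintype V] [DecidableEq V]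
    (H : Matrix V V ℂ) (μ : ℝ) : Submodule ℂ (EuclideanSpace ℂ V) :=
  LinearMap.ker (Matrix.toEuclideanLin H - (μ : ℂ) • LinearMap.id)

noncomputable def mainAngle {V : Type*} [Fintype V] [DecidableEq V]
    (H : Matrix V V ℂ) (μ : ℝ) : ℝ :=
  (1 / Real.sqrt (Fintype.card V)) *
    ‖((eigSp H μ).orthogonalProjectionOnto (WithLp.toLp 2 (fun _ => 1)) : EuclideanSpace ℂ V)‖

noncomputable def eigMult {V : Type*} [Fintype V] [DecidableEq V]
    (H : Matrix V V ℂ) (μ : ℝ) : ℕ :=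
  Module.finrank ℂ (eigSp H μ)

/-- `A` is the adjacency matrix of a tournament: a (0,1)-matrix with `A + Aᵀ = J - I`. -/
def IsTournament {V : Type*} [Fintype V] [DecidableEq V] (A : Matrix V V ℂ) : Prop :=
  (∀ i j, A i j = 0 ∨ A i j = 1) ∧
    A + Aᵀ = Matrix.of (fun _ _ => (1 : ℂ)) - 1

/-- `φ` is a representation of the tournament with adjacency matrix `A` in `Ω(d)`,
with angle `α` (Im α > 0). -/
def IsRepresentation {n d : ℕ} (A : Matrix (Fin n) (Fin n) ℂ) (α : ℂ)
    (φ : Fin n → EuclideanSpace ℂ (Fin d)) : Prop :=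
  0 < α.im ∧ (∀ x, ‖φ x‖ = 1) ∧
    ∀ x y : Fin n, x ≠ y →
      (A x y = 1 → (inner ℂ (φ x) (φ y) : ℂ) = α) ∧
      (A y x = 1 → (inner ℂ (φ x) (φ y) : ℂ) = (starRingEnd ℂ) α)

def Representable {n : ℕ} (A : Matrix (Fin n) (Fin n) ℂ) (d : ℕ) : Prop :=
  ∃ (α : ℂ) (φ : Fin n → EuclideanSpace ℂ (Fin d)), IsRepresentation A α φ

noncomputable def RepDim {n : ℕ} (A : Matrix (Fin n) (Fin n) ℂ) : ℕ :=
  sInf {d | Representable A d}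

/-- doubly regular tournament -/
def IsDoublyRegular {V : Type*} [Fintype V] [DecidableEq V] (A : Matrix V V ℂ) : Prop :=
  IsTournament A ∧
    A *ᵥ (fun _ => 1) = (fun _ => ((Fintype.card V : ℂ) - 1) / 2) ∧
    A * Aᵀ = (((Fintype.card V : ℂ) + 1) / 4) • 1 +
      (((Fintype.card V : ℂ) - 3) / 4) • Matrix.of (fun _ _ => (1 : ℂ))

/-- skew Hadamard matrix -/
def IsSkewHadamard {V : Type*} [Fintype V] [DecidableEq V] (H : Matrix V V ℂ) : Prop :=
  (∀ i j, H i j = 1 ∨ H i j = -1) ∧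
    H + Hᵀ = (2 : ℂ) • 1 ∧ H * Hᵀ = (Fintype.card V : ℂ) • 1

/-- 2-code -/
def IsTwoCode {d : ℕ} (X : Finset (EuclideanSpace ℂ (Fin d))) (α : ℂ) : Prop :=
  α.im ≠ 0 ∧ (∀ x ∈ X, ‖x‖ = 1) ∧
    {z : ℂ | ∃ x ∈ X, ∃ y ∈ X, x ≠ y ∧ (inner ℂ x y : ℂ) = z} = {α, (starRingEnd ℂ) α}

/-- adjacency matrix of a 2-code -/
noncomputable def codeAdj {d : ℕ} (X : Finset (EuclideanSpace ℂ (Fin d))) (α : ℂ) :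
    Matrix {x // x ∈ X} {x // x ∈ X} ℂ :=
  Matrix.of fun x y =>
    if (x : EuclideanSpace ℂ (Fin d)) ≠ (y : EuclideanSpace ℂ (Fin d)) ∧
        (inner ℂ (x : EuclideanSpace ℂ (Fin d)) (y : EuclideanSpace ℂ (Fin d)) : ℂ) = α
    then 1 else 0

lemma eigSp_eq_eigenspace {V : Type*} [Fintype V] [DecidableEq V] (H : Matrix V V ℂ) (μ : ℝ) :
    eigSp H μ = Module.End.eigenspace (Matrix.toEuclideanLin H) ((μ : ℂ)) := by
  rw [Module.End.eigenspace_def, eigSp]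
  rfl

lemma mem_eigSp {V : Type*} [Fintype V] [DecidableEq V] {H : Matrix V V ℂ} {μ : ℝ}
    {v : EuclideanSpace ℂ V} :
    v ∈ eigSp H μ ↔ Matrix.toEuclideanLin H v = (μ : ℂ) • v := by
  rw [eigSp_eq_eigenspace]
  exact Module.End.mem_eigenspace_iff

lemma toEuclideanLin_apply' {m : ℕ} (A : Matrix (Fin m) (Fin m) ℂ)
    (v : EuclideanSpace ℂ (Fin m)) (k : Fin m) :
    Matrix.toEuclideanLin A v k = A.mulVec v k := rfl

noncomputable def onesV (n : ℕ) : EuclideanSpace ℂ (Fin n) := WithLp.toLp 2 (fun _ => 1)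

noncomputable def projOnes {n : ℕ} (H : Matrix (Fin n) (Fin n) ℂ) (μ : ℝ) :
    EuclideanSpace ℂ (Fin n) :=
  ((eigSp H μ).orthogonalProjectionOnto (onesV n) : EuclideanSpace ℂ (Fin n))

lemma projOnes_mem {n : ℕ} (H : Matrix (Fin n) (Fin n) ℂ) (μ : ℝ) :
    projOnes H μ ∈ eigSp H μ := SetLike.coe_mem _

lemma mainAngle_eq {n : ℕ} (H : Matrix (Fin n) (Fin n) ℂ) (μ : ℝ) :
    mainAngle H μ = (1 / Real.sqrt n) * ‖projOnes H μ‖ := by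
  simp only [mainAngle, Fintype.card_fin, projOnes, onesV]

lemma inner_ones_projOnes {n : ℕ} (H : Matrix (Fin n) (Fin n) ℂ) (μ : ℝ) :
    (inner ℂ (onesV n) (projOnes H μ) : ℂ) = ((‖projOnes H μ‖ ^ 2 : ℝ) : ℂ) := by
  have h0 := Submodule.starProjection_inner_eq_zero (K := eigSp H μ) (onesV n)
    (projOnes H μ) (projOnes_mem H μ)
  rw [inner_sub_left, sub_eq_zero] at h0
  have h0' : (inner ℂ (onesV n) (projOnes H μ) : ℂ)
      = inner ℂ (projOnes H μ) (projOnes H μ) := h0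
  rw [h0', inner_self_eq_norm_sq_to_K]
  norm_cast

set_option maxHeartbeats 1000000 in
/-- For a Hermitian `H` with distinct eigenvalues `τ 0 < ⋯ < τ (s-1)` and
main angles `β i = mainAngle H (τ i)`, and `M = H + a J`, the characteristic polynomials
satisfy `P_M(x) = P_H(x) · (1 + a ∑ i, n βᵢ² / (τᵢ − x))` for `x` not an eigenvalue of `H`. -/
theorem charpoly_shift_allOnes {n s : ℕ} (H : Matrix (Fin n) (Fin n) ℂ)
    (hH : H.IsHermitian) (τ : Fin s → ℝ) (hτ : StrictMono τ)
    (heig : ∀ μ : ℝ, eigSp H μ ≠ ⊥ ↔ ∃ i, τ i = μ)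
    (a : ℂ) (M : Matrix (Fin n) (Fin n) ℂ)
    (hM : M = H + a • Matrix.of (fun _ _ => (1 : ℂ)))
    (x : ℂ) (hx : x ∉ spectrum ℂ H) :
    Matrix.det (x • (1 : Matrix (Fin n) (Fin n) ℂ) - M) =
      Matrix.det (x • (1 : Matrix (Fin n) (Fin n) ℂ) - H) *
        (1 + a * ∑ i : Fin s,
          ((n : ℂ) * ((mainAngle H (τ i) : ℝ) : ℂ) ^ 2) / (((τ i : ℝ) : ℂ) - x)) := by
  classical
  have hsym : (Matrix.toEuclideanLin H).IsSymmetric :=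
    Matrix.isHermitian_iff_isSymmetric.mp hH
  set B : Matrix (Fin n) (Fin n) ℂ := x • 1 - H with hBdef
  have hBunit : IsUnit B.det := by
    have h1 := spectrum.notMem_iff.mp hx
    rw [Algebra.algebraMap_eq_smul_one] at h1
    exact (Matrix.isUnit_iff_isUnit_det _).mp h1
  have hne : ∀ i, eigSp H (τ i) ≠ ⊥ := fun i => (heig (τ i)).mpr ⟨i, rfl⟩
  have key : ∀ w : EuclideanSpace ℂ (Fin n), ∀ k,
      B.mulVec w k = (x • w - Matrix.toEuclideanLin H w) k := by
    intro w k
    rw [hBdef, Matrix.sub_mulVec, Matrix.smul_mulVec, Matrix.one_mulVec]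
    show x * w k - (H.mulVec w) k = x * w k - Matrix.toEuclideanLin H w k
    rw [toEuclideanLin_apply']
  -- x ≠ τ i
  have hxτ : ∀ i, x - ((τ i : ℝ) : ℂ) ≠ 0 := by
    intro i h0
    obtain ⟨v, hv, hv0⟩ := Submodule.exists_mem_ne_zero_of_ne_bot (hne i)
    have hTv : Matrix.toEuclideanLin H v = ((τ i : ℝ) : ℂ) • v := mem_eigSp.mp hv
    have hxe : x = ((τ i : ℝ) : ℂ) := sub_eq_zero.mp h0
    have hBv : B.mulVec v = 0 := by
      funext k
      rw [key v k]
      show x • v k - Matrix.toEuclideanLin H v k = 0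
      rw [hTv, hxe]
      show ((τ i : ℝ) : ℂ) * v k - ((τ i : ℝ) : ℂ) * v k = 0
      ring
    have : B.det = 0 := Matrix.exists_mulVec_eq_zero_iff.mp ⟨v, by simpa using hv0, hBv⟩
    exact hBunit.ne_zero this
  -- orthogonal family
  have hfam : @OrthogonalFamily ℂ (EuclideanSpace ℂ (Fin n)) _ _ _ (Fin s)
      (fun i : Fin s => ↥(eigSp H (τ i))) (fun _ => inferInstance) (fun _ => inferInstance)
      (fun i => (eigSp H (τ i)).subtypeₗᵢ) := by
    intro i k hik v w
    have hne' : ((τ i : ℝ) : ℂ) ≠ ((τ k : ℝ) : ℂ) := by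
      simp only [ne_eq, Complex.ofReal_inj]
      exact fun h => hik (hτ.injective h)
    simpa using hsym.orthogonalFamily_eigenspaces hne'
      ⟨v.1, (eigSp_eq_eigenspace H (τ i)) ▸ v.2⟩ ⟨w.1, (eigSp_eq_eigenspace H (τ k)) ▸ w.2⟩
  -- supremum is everything
  have hsup : (⨆ i : Fin s, eigSp H (τ i)) = ⊤ := by
    have h2 : (⨆ μ : ℂ, Module.End.eigenspace (Matrix.toEuclideanLin H) μ) = ⊤ := by
      rw [← Submodule.orthogonal_eq_bot_iff]
      exact hsym.orthogonalComplement_iSup_eigenspaces_eq_bot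
    rw [eq_top_iff, ← h2]
    refine iSup_le fun μ => ?_
    rcases eq_or_ne (Module.End.eigenspace (Matrix.toEuclideanLin H) μ) ⊥ with hb | hb
    · rw [hb]; exact bot_le
    · have hev : Module.End.HasEigenvalue (Matrix.toEuclideanLin H) μ :=
        Module.End.hasEigenvalue_iff.mpr hb
      have hconj := hsym.conj_eigenvalue_eq_self hev
      have hμre : ((μ.re : ℝ) : ℂ) = μ := Complex.conj_eq_iff_re.mp hconj
      obtain ⟨i, hi⟩ := (heig μ.re).mp (by rw [eigSp_eq_eigenspace, hμre]; exact hb)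
      have heq : Module.End.eigenspace (Matrix.toEuclideanLin H) μ = eigSp H (τ i) := by
        rw [eigSp_eq_eigenspace, hi, hμre]
      rw [heq]
      exact le_iSup (fun i => eigSp H (τ i)) i
  have hdec : (∑ i : Fin s, projOnes H (τ i)) = onesV n := by
    have := hfam.sum_projection_of_mem_iSup (onesV n) (by rw [hsup]; exact Submodule.mem_top)
    simpa [projOnes] using this
  -- the resolvent vector
  set v : EuclideanSpace ℂ (Fin n) :=
    ∑ i : Fin s, ((x - ((τ i : ℝ) : ℂ))⁻¹) • projOnes H (τ i) with hvdef
  have hTv : x • v - Matrix.toEuclideanLin H v = onesV n := by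
    have h : x • v - Matrix.toEuclideanLin H v = ∑ i : Fin s, projOnes H (τ i) := by
      rw [hvdef, map_sum, Finset.smul_sum, ← Finset.sum_sub_distrib]
      refine Finset.sum_congr rfl fun i _ => ?_
      rw [_root_.map_smul, mem_eigSp.mp (projOnes_mem H (τ i)), smul_smul, smul_smul, mul_comm x, ← sub_smul,
        ← mul_sub, inv_mul_cancel₀ (hxτ i), one_smul]
    rw [h, hdec]
  have hBv : B.mulVec v = (fun _ => (1 : ℂ)) := by
    funext k
    rw [key v k, hTv]
    rfl
  have hinv : B⁻¹.mulVec (fun _ => (1 : ℂ)) = fun k => v k := by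
    rw [← hBv, Matrix.mulVec_mulVec, Matrix.nonsing_inv_mul B hBunit, Matrix.one_mulVec]
  -- inner products
  have hjv : (inner ℂ (onesV n) v : ℂ) = ∑ k, v k := by
    simp [PiLp.inner_apply, RCLike.inner_apply, onesV]
  have hvinner : (inner ℂ (onesV n) v : ℂ)
      = ∑ i : Fin s, (x - ((τ i : ℝ) : ℂ))⁻¹ * ((‖projOnes H (τ i)‖ ^ 2 : ℝ) : ℂ) := by
    rw [hvdef, inner_sum]
    exact Finset.sum_congr rfl fun i _ => by
      rw [inner_smul_right, inner_ones_projOnes]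
  -- main angle identity
  have hmain : ∀ i, ((n : ℂ) * ((mainAngle H (τ i) : ℝ) : ℂ) ^ 2)
      = ((‖projOnes H (τ i)‖ ^ 2 : ℝ) : ℂ) := by
    intro i
    have hn : 0 < n := by
      rcases Nat.eq_zero_or_pos n with h0 | h
      · exfalso
        apply hne i
        subst h0
        haveI : Subsingleton (EuclideanSpace ℂ (Fin 0)) :=
          ⟨fun a b => PiLp.ext fun k => Fin.elim0 k⟩
        exact Subsingleton.elim _ _
      · exact h
    have hr : (n : ℝ) * (mainAngle H (τ i)) ^ 2 = ‖projOnes H (τ i)‖ ^ 2 := by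
      rw [mainAngle_eq, mul_pow, div_pow, one_pow, Real.sq_sqrt (Nat.cast_nonneg n),
        ← mul_assoc, mul_one_div, div_self (Nat.cast_ne_zero.mpr hn.ne'), one_mul]
    calc ((n : ℂ) * ((mainAngle H (τ i) : ℝ) : ℂ) ^ 2)
        = (((n : ℝ) * (mainAngle H (τ i)) ^ 2 : ℝ) : ℂ) := by push_cast; ring
      _ = ((‖projOnes H (τ i)‖ ^ 2 : ℝ) : ℂ) := by rw [hr]
  -- determinant lemma
  have hMB : x • (1 : Matrix (Fin n) (Fin n) ℂ) - M
      = B + Matrix.replicateCol (Fin 1) (fun _ => -a) * Matrix.replicateRow (Fin 1) (fun _ => (1 : ℂ)) := by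
    rw [hM, hBdef]
    ext i k
    simp [Matrix.mul_apply, Matrix.sub_apply, Matrix.add_apply, Matrix.one_apply,
      Matrix.replicateCol_apply, Matrix.replicateRow_apply]
    ring
  have hval : (fun _ : Fin n => (1 : ℂ)) ⬝ᵥ (B⁻¹ *ᵥ (fun _ : Fin n => -a))
      = -a * (inner ℂ (onesV n) v : ℂ) := by
    have h1 : (fun _ : Fin n => (-a : ℂ)) = (-a) • (fun _ => (1 : ℂ)) := by
      funext k; simp
    rw [h1, Matrix.mulVec_smul, dotProduct_smul, hinv, smul_eq_mul, hjv]
    congr 1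
    simp [dotProduct]
  have hc : B *ᵥ (B⁻¹ *ᵥ (fun _ : Fin n => -a)) = (fun _ : Fin n => -a) := by
    rw [Matrix.mulVec_mulVec, Matrix.mul_nonsing_inv B hBunit, Matrix.one_mulVec]
  have hsplit : x • (1 : Matrix (Fin n) (Fin n) ℂ) - M
      = B * ((1 : Matrix (Fin n) (Fin n) ℂ)
        + Matrix.replicateCol (Fin 1) (B⁻¹ *ᵥ (fun _ : Fin n => -a))
          * Matrix.replicateRow (Fin 1) (fun _ : Fin n => (1 : ℂ))) := by
    rw [Matrix.mul_add, Matrix.mul_one, ← Matrix.mul_assoc, ← Matrix.replicateCol_mulVec, hc, hMB]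
  rw [hsplit, Matrix.det_mul]
  erw [Matrix.det_one_add_replicateCol_mul_replicateRow (ι := Fin 1)]
  congr 1
  rw [hval, hvinner, Finset.mul_sum, Finset.mul_sum]
  congr 1
  refine Finset.sum_congr rfl fun i _ => ?_
  rw [hmain i, div_eq_mul_inv]
  have h1 : (((τ i : ℝ) : ℂ) - x) = -(x - ((τ i : ℝ) : ℂ)) := by ring
  rw [h1, inv_neg]
  ring
end

section
/- Let H be an n×n Hermitian matrix, a a real number with a < 0, J the n×n all-ones matrix, and M = H + aJ. Let τ_1 < ⋯ < τ_r be the distinct main eigenvalues of H and μ_1 < ⋯ < μ_r the distinct main eigenvalues of M (there are equally many). Then the strict interlacing μ_1 < τ_1 < μ_2 < τ_2 < ⋯ < μ_r < τ_r holds. -/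
open Matrix
open scoped Classical

section Aux

open Filter Set Finset Topology in
lemma secular_root {r : ℕ} (τ b : Fin r → ℝ) (hτ : StrictMono τ)
    (hb : ∀ k, 0 < b k) (a : ℝ) (ha : a < 0) (i : Fin r) :
    ∃ ν : ℝ, (1 + ∑ k, a * b k / (τ k - ν) = 0) ∧ ν < τ i ∧
      ∀ k : Fin r, (k : ℕ) < (i : ℕ) → τ k < ν := by
  set g : ℝ → ℝ := fun t => 1 + ∑ k, a * b k / (τ k - t) with hg
  -- continuity
  have cont : ∀ s : Set ℝ, (∀ t ∈ s, ∀ k, τ k ≠ t) → ContinuousOn g s := by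
    intro s hs
    refine continuousOn_const.add (continuousOn_finset_sum _ fun k _ => ?_)
    exact continuousOn_const.div ((continuous_const.sub continuous_id).continuousOn)
      (fun t ht => sub_ne_zero.2 (hs t ht k))
  -- splitting of g
  have hsplit : ∀ k : Fin r, g = fun t =>
      (a * b k) * (τ k - t)⁻¹ + (1 + ∑ l ∈ Finset.univ.erase k, a * b l / (τ l - t)) := by
    intro k
    funext t
    show 1 + ∑ l : Fin r, a * b l / (τ l - t) = _
    rw [← Finset.add_sum_erase _ (fun l => a * b l / (τ l - t)) (Finset.mem_univ k)]
    ring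
  have habk : ∀ k, a * b k < 0 := fun k => mul_neg_of_neg_of_pos ha (hb k)
  -- rest tends to a finite limit
  have hrest : ∀ k : Fin r, ∀ l : Filter ℝ, l ≤ 𝓝 (τ k) →
      Tendsto (fun t => 1 + ∑ l ∈ Finset.univ.erase k, a * b l / (τ l - t)) l
        (𝓝 (1 + ∑ l ∈ Finset.univ.erase k, a * b l / (τ l - τ k))) := by
    intro k l hl
    refine tendsto_const_nhds.add (tendsto_finset_sum _ fun m hm => ?_)
    have hne : τ m - τ k ≠ 0 := sub_ne_zero.2 (fun h => (Finset.mem_erase.1 hm).1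
      (hτ.injective h))
    exact ((continuousAt_const.div ((continuous_const.sub continuous_id).continuousAt)
      hne)).mono_left hl
  -- tendsto atBot from the left of each τ i
  have tendbot : ∀ k : Fin r, Tendsto g (𝓝[<] τ k) atBot := by
    intro k
    rw [hsplit k]
    refine Tendsto.atBot_add ?_ (hrest k _ nhdsWithin_le_nhds)
    refine Tendsto.const_mul_atTop_of_neg (habk k) ?_
    refine tendsto_inv_nhdsGT_zero.comp ?_
    apply tendsto_nhdsWithin_of_tendsto_nhds_of_eventually_within
    · have : Tendsto (fun t : ℝ => τ k - t) (𝓝 (τ k)) (𝓝 (τ k - τ k)) :=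
        (continuous_const.sub continuous_id).tendsto _
      rw [sub_self] at this
      exact this.mono_left nhdsWithin_le_nhds
    · filter_upwards [self_mem_nhdsWithin] with t ht
      exact sub_pos.2 (Set.mem_Iio.1 ht)
  -- tendsto atTop from the right of each τ p
  have tendtop : ∀ k : Fin r, Tendsto g (𝓝[>] τ k) atTop := by
    intro k
    rw [hsplit k]
    refine Tendsto.atTop_add ?_ (hrest k _ nhdsWithin_le_nhds)
    have hrw : (fun t : ℝ => (a * b k) * (τ k - t)⁻¹)
        = fun t => (-(a * b k)) * (t - τ k)⁻¹ := by
      funext t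
      rw [← neg_sub t (τ k), inv_neg]
      ring
    rw [hrw]
    refine Tendsto.const_mul_atTop (by linarith [habk k]) ?_
    refine tendsto_inv_nhdsGT_zero.comp ?_
    apply tendsto_nhdsWithin_of_tendsto_nhds_of_eventually_within
    · have : Tendsto (fun t : ℝ => t - τ k) (𝓝 (τ k)) (𝓝 (τ k - τ k)) :=
        (continuous_id.sub continuous_const).tendsto _
      rw [sub_self] at this
      exact this.mono_left nhdsWithin_le_nhds
    · filter_upwards [self_mem_nhdsWithin] with t ht
      exact sub_pos.2 (Set.mem_Ioi.1 ht)
  -- tendsto 1 at -infty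
  have tendone : Tendsto g atBot (𝓝 1) := by
    have : Tendsto (fun t : ℝ => ∑ k, a * b k / (τ k - t)) atBot (𝓝 0) := by
      have : Tendsto (fun t : ℝ => ∑ k : Fin r, a * b k / (τ k - t)) atBot
          (𝓝 (∑ k : Fin r, (0:ℝ))) := by
        refine tendsto_finset_sum _ fun k _ => ?_
        have h1 : Tendsto (fun t : ℝ => τ k - t) atBot atTop := by
          apply tendsto_atTop_add_const_left
          exact tendsto_neg_atBot_atTop
        have h2 : Tendsto (fun t : ℝ => (τ k - t)⁻¹) atBot (𝓝 0) :=
          tendsto_inv_atTop_zero.comp h1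
        have h3 := h2.const_mul (a * b k)
        rw [mul_zero] at h3
        simpa [div_eq_mul_inv] using h3
      simpa using this
    have h := this.const_add (1:ℝ)
    rw [add_zero] at h
    exact h
  -- the eventual negativity near τ i from the left, within an interval
  have hleft : ∀ t₁, t₁ < τ i → ∃ t₂, g t₂ < 0 ∧ t₂ ∈ Ioo t₁ (τ i) := by
    intro t₁ ht₁
    have h1 : ∀ᶠ t in 𝓝[<] τ i, g t < 0 := (tendbot i).eventually (eventually_lt_atBot 0)
    have h2 : Ioo t₁ (τ i) ∈ 𝓝[<] τ i := Ioo_mem_nhdsLT ht₁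
    exact (h1.and h2).exists
  by_cases h0 : (i : ℕ) = 0
  · -- leftmost root
    obtain ⟨t₁, hgt₁, ht₁⟩ : ∃ t₁, 0 < g t₁ ∧ t₁ < τ i := by
      have h1 : ∀ᶠ t in atBot, 0 < g t := tendone.eventually (eventually_gt_nhds one_pos)
      exact (h1.and (eventually_lt_atBot (τ i))).exists
    obtain ⟨t₂, hgt₂, ht₂⟩ := hleft t₁ ht₁
    have hcont : ContinuousOn g (Icc t₁ t₂) := by
      refine cont _ fun t ht k => ?_
      have : t < τ k := lt_of_le_of_lt ht.2 (lt_of_lt_of_le ht₂.2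
        (hτ.monotone (show i ≤ k by omega)))
      exact ne_of_gt this
    have h0mem : (0:ℝ) ∈ Icc (g t₂) (g t₁) := ⟨le_of_lt hgt₂, le_of_lt hgt₁⟩
    obtain ⟨ν, hν, hgν⟩ := intermediate_value_Icc' (le_of_lt ht₂.1) hcont h0mem
    refine ⟨ν, by simpa [hg] using hgν, lt_of_le_of_lt hν.2 ht₂.2, fun k hk => absurd hk (by omega)⟩
  · -- root in a gap
    have hpr : (i : ℕ) - 1 < r := by omega
    set p : Fin r := ⟨(i : ℕ) - 1, hpr⟩ with hp
    have hpval : (p : ℕ) = (i : ℕ) - 1 := rfl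
    have hpi : τ p < τ i := hτ (by rw [Fin.lt_def]; omega)
    obtain ⟨t₁, hgt₁, ht₁⟩ : ∃ t₁, 0 < g t₁ ∧ t₁ ∈ Ioo (τ p) (τ i) := by
      have h1 : ∀ᶠ t in 𝓝[>] τ p, 0 < g t := (tendtop p).eventually (eventually_gt_atTop 0)
      exact (h1.and (Ioo_mem_nhdsGT hpi)).exists
    obtain ⟨t₂, hgt₂, ht₂⟩ := hleft t₁ ht₁.2
    have hcont : ContinuousOn g (Icc t₁ t₂) := by
      refine cont _ fun t ht k => ?_
      rcases le_or_gt (k : ℕ) ((i : ℕ) - 1) with hk | hk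
      · have : τ k ≤ τ p := hτ.monotone (by rw [Fin.le_def]; omega)
        exact ne_of_lt (lt_of_le_of_lt this (lt_of_lt_of_le ht₁.1 ht.1))
      · have : τ i ≤ τ k := hτ.monotone (by rw [Fin.le_def]; omega)
        exact ne_of_gt (lt_of_le_of_lt ht.2 (lt_of_lt_of_le ht₂.2 this))
    have h0mem : (0:ℝ) ∈ Icc (g t₂) (g t₁) := ⟨le_of_lt hgt₂, le_of_lt hgt₁⟩
    obtain ⟨ν, hν, hgν⟩ := intermediate_value_Icc' (le_of_lt ht₂.1) hcont h0mem
    refine ⟨ν, by simpa [hg] using hgν, lt_of_le_of_lt hν.2 ht₂.2, fun k hk => ?_⟩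
    have : τ k ≤ τ p := hτ.monotone (by rw [Fin.le_def]; omega)
    exact lt_of_le_of_lt this (lt_of_lt_of_le ht₁.1 hν.1)

lemma mem_eigSp_s3 {n : ℕ} {H : Matrix (Fin n) (Fin n) ℂ} {t : ℝ}
    {x : EuclideanSpace ℂ (Fin n)} :
    x ∈ eigSp H t ↔ Matrix.toEuclideanLin H x = (t : ℂ) • x := by
  simp [eigSp, LinearMap.mem_ker, LinearMap.sub_apply, LinearMap.smul_apply,
    LinearMap.id_apply, sub_eq_zero]

lemma eigSp_orth {n : ℕ} {H : Matrix (Fin n) (Fin n) ℂ} (hH : H.IsHermitian)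
    {s t : ℝ} (hst : s ≠ t) {v w : EuclideanSpace ℂ (Fin n)}
    (hv : v ∈ eigSp H s) (hw : w ∈ eigSp H t) : (inner ℂ v w : ℂ) = 0 := by
  have hT := (Matrix.isHermitian_iff_isSymmetric.1 hH)
  have h1 := hT v w
  rw [mem_eigSp_s3] at hv hw
  rw [hv, hw, inner_smul_left, inner_smul_right, Complex.conj_ofReal] at h1
  have h2 : ((s : ℂ) - t) * (inner ℂ v w : ℂ) = 0 := by linear_combination h1
  rcases mul_eq_zero.1 h2 with h | h
  · exact absurd (by exact_mod_cast sub_eq_zero.1 h) hst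
  · exact h

lemma orthogonalProjection_inner_eq_zero {n : ℕ} {K : Submodule ℂ (EuclideanSpace ℂ (Fin n))}
    (v w : EuclideanSpace ℂ (Fin n)) (hw : w ∈ K) :
    inner ℂ (v - (K.orthogonalProjectionOnto v : EuclideanSpace ℂ (Fin n))) w = 0 := by
  have h := K.starProjection_inner_eq_zero v w hw
  rwa [Submodule.starProjection_apply] at h

lemma inner_orthProj_self {n : ℕ} (K : Submodule ℂ (EuclideanSpace ℂ (Fin n)))
    (v : EuclideanSpace ℂ (Fin n)) :
    (inner ℂ v (K.orthogonalProjectionOnto v : EuclideanSpace ℂ (Fin n)) : ℂ)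
      = ((‖(K.orthogonalProjectionOnto v : EuclideanSpace ℂ (Fin n))‖ ^ 2 : ℝ) : ℂ) := by
  have h := orthogonalProjection_inner_eq_zero v
    (K.orthogonalProjectionOnto v : EuclideanSpace ℂ (Fin n)) (SetLike.coe_mem _)
  rw [inner_sub_left, sub_eq_zero] at h
  rw [h, inner_self_eq_norm_sq_to_K]
  norm_cast

lemma j_eq_sum_proj {n r : ℕ} {H : Matrix (Fin n) (Fin n) ℂ} (hH : H.IsHermitian)
    {τ : Fin r → ℝ} (hτ : Function.Injective τ)
    (jv : EuclideanSpace ℂ (Fin n)) (hjv : jv = WithLp.toLp 2 (fun _ => 1))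
    (h0 : ∀ t : ℝ, (¬ ∃ i, τ i = t) →
      ((eigSp H t).orthogonalProjectionOnto jv : EuclideanSpace ℂ (Fin n)) = 0) :
    jv = ∑ i, ((eigSp H (τ i)).orthogonalProjectionOnto jv : EuclideanSpace ℂ (Fin n)) := by
  set T := Matrix.toEuclideanLin H with hTdef
  have hT : T.IsSymmetric := Matrix.isHermitian_iff_isSymmetric.1 hH
  set u : EuclideanSpace ℂ (Fin n) :=
    jv - ∑ i, ((eigSp H (τ i)).orthogonalProjectionOnto jv : EuclideanSpace ℂ (Fin n)) with hu
  have hsp : ∀ t : ℝ, eigSp H t = Module.End.eigenspace T ((t : ℂ)) := by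
    intro t
    ext x
    rw [mem_eigSp_s3, Module.End.mem_eigenspace_iff]
  have key : ∀ t : ℝ, ∀ v ∈ eigSp H t, (inner ℂ v u : ℂ) = 0 := by
    intro t v hv
    rw [hu, inner_sub_right, inner_sum]
    by_cases ht : ∃ k, τ k = t
    · obtain ⟨k, rfl⟩ := ht
      rw [Finset.sum_eq_single k]
      · have h := orthogonalProjection_inner_eq_zero (K := eigSp H (τ k)) jv v hv
        rw [← inner_sub_right]
        exact inner_eq_zero_symm.1 h
      · intro m _ hm
        exact eigSp_orth hH (fun h => hm (hτ h).symm) hv (SetLike.coe_mem _)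
      · intro h
        exact absurd (Finset.mem_univ k) h
    · have h := orthogonalProjection_inner_eq_zero (K := eigSp H t) jv v hv
      rw [h0 t ht, sub_zero] at h
      rw [Finset.sum_eq_zero (fun m _ =>
        eigSp_orth hH (fun h' => ht ⟨m, h'.symm⟩) hv (SetLike.coe_mem _)), sub_zero]
      exact inner_eq_zero_symm.1 h
  have key2 : ∀ μ : ℂ, u ∈ (Module.End.eigenspace T μ)ᗮ := by
    intro μ
    rw [Submodule.mem_orthogonal]
    intro v hv
    by_cases hv0 : v = 0
    · simp [hv0]
    · have hev : Module.End.HasEigenvalue T μ :=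
        Module.End.hasEigenvalue_of_hasEigenvector ⟨hv, hv0⟩
      have hre : ((μ.re : ℝ) : ℂ) = μ :=
        Complex.conj_eq_iff_re.1 (hT.conj_eigenvalue_eq_self hev)
      rw [← hre] at hv
      exact key μ.re v ((hsp μ.re) ▸ hv)
  have humem : u ∈ (⨆ μ : ℂ, Module.End.eigenspace T μ)ᗮ := by
    rw [← Submodule.iInf_orthogonal]
    exact (Submodule.mem_iInf _).2 key2
  rw [hT.orthogonalComplement_iSup_eigenspaces_eq_bot] at humem
  have h := (Submodule.mem_bot ℂ).1 humem
  rw [hu, sub_eq_zero] at h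
  exact h

lemma allOnes_mulVec {n : ℕ} (jv y : EuclideanSpace ℂ (Fin n)) (hjv : jv = WithLp.toLp 2 (fun _ => 1)) :
    Matrix.toEuclideanLin (Matrix.of (fun _ _ => (1 : ℂ)) : Matrix (Fin n) (Fin n) ℂ) y
      = (inner ℂ jv y : ℂ) • jv := by
  subst hjv
  ext idx
  simp [Matrix.toEuclideanLin_apply, Matrix.mulVec, dotProduct, PiLp.inner_apply,
    PiLp.smul_apply, smul_eq_mul]

end Aux

/-- if `a < 0`, the distinct main eigenvalues of `H` and of `M = H + a J`
strictly interlace as `μ 1 < τ 1 < μ 2 < τ 2 < ⋯ < μ r < τ r`. -/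
theorem main_eigenvalue_interlacing_neg {n r : ℕ} (H : Matrix (Fin n) (Fin n) ℂ)
    (hH : H.IsHermitian) (a : ℝ) (ha : a < 0) (M : Matrix (Fin n) (Fin n) ℂ)
    (hM : M = H + (a : ℂ) • Matrix.of (fun _ _ => (1 : ℂ)))
    (τ : Fin r → ℝ) (hτ : StrictMono τ)
    (hmainH : ∀ t : ℝ, mainAngle H t ≠ 0 ↔ ∃ i, τ i = t)
    (μ : Fin r → ℝ) (hμ : StrictMono μ)
    (hmainM : ∀ t : ℝ, mainAngle M t ≠ 0 ↔ ∃ i, μ i = t) :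
    (∀ i : Fin r, μ i < τ i) ∧
      ∀ (i : Fin r) (h : (i : ℕ) + 1 < r), τ i < μ ⟨(i : ℕ) + 1, h⟩ := by
  rcases Nat.eq_zero_or_pos n with hn0 | hnpos
  · -- degenerate case : n = 0 forces r = 0
    have hr0 : ∀ i : Fin r, False := by
      intro i
      have h := (hmainM (μ i)).2 ⟨i, rfl⟩
      apply h
      simp [mainAngle, hn0]
    exact ⟨fun i => (hr0 i).elim, fun i h => (hr0 i).elim⟩
  have hn1 : (1 : ℝ) / Real.sqrt (Fintype.card (Fin n)) ≠ 0 := by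
    have : (0 : ℝ) < Real.sqrt n := Real.sqrt_pos.2 (by exact_mod_cast hnpos)
    simp only [Fintype.card_fin]
    positivity
  obtain ⟨jv, hjv⟩ : ∃ jv : EuclideanSpace ℂ (Fin n), jv = WithLp.toLp 2 (fun _ => 1) := ⟨_, rfl⟩
  have hangle : ∀ (A : Matrix (Fin n) (Fin n) ℂ) (t : ℝ), mainAngle A t
      = (1 / Real.sqrt (Fintype.card (Fin n)))
        * ‖((eigSp A t).orthogonalProjectionOnto jv : EuclideanSpace ℂ (Fin n))‖ := by
    intro A t
    rw [mainAngle, ← hjv]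
  set w : Fin r → EuclideanSpace ℂ (Fin n) :=
    fun i => ((eigSp H (τ i)).orthogonalProjectionOnto jv : EuclideanSpace ℂ (Fin n)) with hw
  set b : Fin r → ℝ := fun i => ‖w i‖ ^ 2 with hbdef
  have hproj0 : ∀ t : ℝ, (¬ ∃ i, τ i = t) →
      ((eigSp H t).orthogonalProjectionOnto jv : EuclideanSpace ℂ (Fin n)) = 0 := by
    intro t ht
    by_contra hP
    refine ht ((hmainH t).1 ?_)
    rw [hangle]
    exact mul_ne_zero hn1 (norm_ne_zero_iff.2 hP)
  have hb : ∀ i, 0 < b i := by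
    intro i
    have h := (hmainH (τ i)).2 ⟨i, rfl⟩
    rw [hangle] at h
    have h2 : ‖w i‖ ≠ 0 := by
      intro h3
      rw [hw] at h3
      simp only [] at h3
      rw [h3, mul_zero] at h
      exact h rfl
    positivity
  have hdecomp : jv = ∑ i, w i := j_eq_sum_proj hH hτ.injective jv hjv hproj0
  -- the roots of the secular equation
  choose ν hν1 hν2 hν3 using secular_root τ b hτ hb a ha
  have hνmono : StrictMono ν := fun i k hik => (hν2 i).trans (hν3 k i hik)
  -- each root is a main eigenvalue of M
  have hmem : ∀ i : Fin r, ∃ k, μ k = ν i := by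
    intro i
    apply (hmainM (ν i)).1
    have hτν : ∀ k, τ k ≠ ν i := by
      intro k
      rcases lt_or_ge (k : ℕ) (i : ℕ) with hk | hk
      · exact ne_of_lt (hν3 i k hk)
      · exact ne_of_gt (lt_of_lt_of_le (hν2 i) (hτ.monotone (by rwa [Fin.le_def])))
    have hc : ∀ k, ((τ k : ℂ) - (ν i : ℂ)) ≠ 0 := by
      intro k
      rw [sub_ne_zero]
      exact_mod_cast hτν k
    set c : Fin r → ℂ := fun k => ((τ k : ℂ) - (ν i : ℂ))⁻¹ with hcdef
    set x : EuclideanSpace ℂ (Fin n) := ∑ k, c k • w k with hx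
    -- inner products with jv
    have hinner_jw : ∀ k, (inner ℂ jv (w k) : ℂ) = ((b k : ℝ) : ℂ) :=
      fun k => inner_orthProj_self (eigSp H (τ k)) jv
    have hinner_jx : (inner ℂ jv x : ℂ) = ∑ k, c k * ((b k : ℝ) : ℂ) := by
      rw [hx, inner_sum]
      exact Finset.sum_congr rfl fun k _ => by rw [inner_smul_right, hinner_jw]
    -- the secular identity, complexified
    have hS : (1 : ℂ) + (a : ℂ) * ∑ k, c k * ((b k : ℝ) : ℂ) = 0 := by
      have h := hν1 i
      have h2 : ((1 + ∑ k, a * b k / (τ k - ν i) : ℝ) : ℂ) = 0 := by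
        rw [h]; norm_num
      rw [← h2]
      push_cast
      rw [Finset.mul_sum]
      exact congrArg (1 + ·) (Finset.sum_congr rfl fun k _ => by
        rw [hcdef]; simp only []; rw [div_eq_mul_inv]; ring)
    have haS : (a : ℂ) * ∑ k, c k * ((b k : ℝ) : ℂ) = -1 := by linear_combination hS
    -- x is an eigenvector of M with eigenvalue ν i
    have hTx : Matrix.toEuclideanLin H x = ∑ k, (c k * (τ k : ℂ)) • w k := by
      rw [hx, map_sum]
      refine Finset.sum_congr rfl fun k _ => ?_
      rw [_root_.map_smul, mem_eigSp_s3.1 (SetLike.coe_mem _), smul_smul]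
    have heig : Matrix.toEuclideanLin M x = ((ν i : ℝ) : ℂ) • x := by
      calc Matrix.toEuclideanLin M x
          = (∑ k, (c k * (τ k : ℂ)) • w k)
            + (((a : ℂ) * ∑ k, c k * ((b k : ℝ) : ℂ)) • ∑ k, w k) := by
            rw [hM, map_add, LinearMap.add_apply, _root_.map_smul, LinearMap.smul_apply,
              allOnes_mulVec jv x hjv, hTx, hinner_jx, hdecomp, smul_smul]
        _ = ∑ k, ((c k * (τ k : ℂ)) • w k
            + ((a : ℂ) * ∑ l, c l * ((b l : ℝ) : ℂ)) • w k) := by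
            rw [Finset.smul_sum, ← Finset.sum_add_distrib]
        _ = ∑ k, (((ν i : ℝ) : ℂ) * c k) • w k := by
            refine Finset.sum_congr rfl fun k _ => ?_
            rw [← add_smul]
            congr 1
            rw [haS, hcdef]
            simp only []
            have hinv : ((τ k : ℂ) - (ν i : ℂ)) * ((τ k : ℂ) - (ν i : ℂ))⁻¹ = 1 :=
              mul_inv_cancel₀ (hc k)
            linear_combination hinv
        _ = ((ν i : ℝ) : ℂ) • x := by
            rw [hx, Finset.smul_sum]
            exact Finset.sum_congr rfl fun k _ => (smul_smul _ _ _).symm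
    have hxmem : x ∈ eigSp M (ν i) := mem_eigSp_s3.2 heig
    -- hence jv has nonzero projection there
    have hjx : (inner ℂ jv x : ℂ) ≠ 0 := by
      rw [hinner_jx]
      intro h
      rw [h, mul_zero] at haS
      norm_num at haS
    have hproj_ne :
        ((eigSp M (ν i)).orthogonalProjectionOnto jv : EuclideanSpace ℂ (Fin n)) ≠ 0 := by
      intro hP
      have h := orthogonalProjection_inner_eq_zero (K := eigSp M (ν i)) jv x hxmem
      rw [hP, sub_zero] at h
      exact hjx h
    rw [hangle]
    exact mul_ne_zero hn1 (norm_ne_zero_iff.2 hproj_ne)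
  -- ν and μ have the same range, hence are equal
  have hsub : Finset.univ.image ν ⊆ Finset.univ.image μ := by
    intro t ht
    simp only [Finset.mem_image, Finset.mem_univ, true_and] at ht ⊢
    obtain ⟨i, rfl⟩ := ht
    exact hmem i
  have hcard : (Finset.univ.image μ).card ≤ (Finset.univ.image ν).card := by
    rw [Finset.card_image_of_injective _ hμ.injective,
      Finset.card_image_of_injective _ hνmono.injective]
  have himg : Finset.univ.image ν = Finset.univ.image μ :=
    Finset.eq_of_subset_of_card_le hsub hcard
  have hrange : Set.range ν = Set.range μ := by
    rw [← Set.image_univ, ← Set.image_univ, ← Finset.coe_univ, ← Finset.coe_image,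
      ← Finset.coe_image, himg]
  haveI : WellFoundedLT (Fin r) := inferInstance
  have hνμ : ν = μ := Set.range_injOn_strictMono (β := Fin r) hνmono hμ hrange
  constructor
  · intro i
    rw [← hνμ]
    exact hν2 i
  · intro i h
    rw [← hνμ]
    exact hν3 ⟨(i : ℕ) + 1, h⟩ i (by simp)
end

section
/- Let d be an odd positive integer and let X be a complex spherical 2-code in Ω(d). Then |X| ≤ 2d + 1. -/
open Matrix
open scoped Classical

set_option maxRecDepth 8000 in
set_option maxHeartbeats 1000000 in
open scoped ComplexOrder in
private lemma matrix_rank_add_le' {V : Type*} [Fintype V] [DecidableEq V]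
    (A B : Matrix V V ℂ) : (A + B).rank ≤ A.rank + B.rank := by
  classical
  unfold Matrix.rank
  rw [Matrix.mulVecLin_add]
  have h : LinearMap.range (A.mulVecLin + B.mulVecLin) ≤
      LinearMap.range A.mulVecLin ⊔ LinearMap.range B.mulVecLin := by
    rintro x ⟨v, rfl⟩
    exact Submodule.add_mem_sup ⟨v, rfl⟩ ⟨v, rfl⟩
  calc Module.finrank ℂ ↥(LinearMap.range (A.mulVecLin + B.mulVecLin))
      ≤ Module.finrank ℂ ↥(LinearMap.range A.mulVecLin ⊔ LinearMap.range B.mulVecLin) :=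
        Submodule.finrank_mono h
    _ ≤ _ := Submodule.finrank_add_le_finrank_add_finrank _ _

set_option maxRecDepth 8000 in
set_option maxHeartbeats 1000000 in
open scoped ComplexOrder in
private lemma twoCode_main {d : ℕ} (hd : 0 < d)
    (X : Finset (EuclideanSpace ℂ (Fin d))) (α : ℂ)
    (him : α.im ≠ 0) (hnorm : ∀ x ∈ X, ‖x‖ = 1)
    (hset : {z : ℂ | ∃ x ∈ X, ∃ y ∈ X, x ≠ y ∧ (inner ℂ x y : ℂ) = z} = {α, (starRingEnd ℂ) α}) :
    X.card ≤ 2 * d + 1 := by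
  by_cases hsmall : X.card ≤ 1
  · omega
  push_neg at hsmall
  -- α is achieved, so ‖α‖ ≤ 1 and α.re ≠ 1
  have hαmem : α ∈ {z : ℂ | ∃ x ∈ X, ∃ y ∈ X, x ≠ y ∧ (inner ℂ x y : ℂ) = z} := by
    rw [hset]; left; rfl
  obtain ⟨x₀, hx₀, y₀, hy₀, hne₀, hin₀⟩ := hαmem
  have hα1 : ‖α‖ ≤ 1 := by
    rw [← hin₀]
    calc ‖(inner ℂ x₀ y₀ : ℂ)‖ ≤ ‖x₀‖ * ‖y₀‖ := norm_inner_le_norm _ _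
      _ = 1 := by rw [hnorm x₀ hx₀, hnorm y₀ hy₀]; ring
  have hre : α.re ≠ 1 := by
    intro h
    have h4 : ‖α‖ ^ 2 = α.re ^ 2 + α.im ^ 2 := by
      rw [Complex.sq_norm, Complex.normSq_apply]; ring
    have h5 : 0 < α.im ^ 2 := (sq_nonneg _).lt_of_ne' (pow_ne_zero 2 him)
    nlinarith [norm_nonneg α]
  set V := {x // x ∈ X}
  have hcard : Fintype.card V = X.card := Fintype.card_coe X
  -- Gram matrix
  set G : Matrix V V ℂ := Matrix.of (fun x y => (inner ℂ (x : EuclideanSpace ℂ (Fin d)) (y : EuclideanSpace ℂ (Fin d)) : ℂ)) with hG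
  -- G = Nᴴ * N
  set N : Matrix (Fin d) V ℂ := Matrix.of (fun i x => (x : EuclideanSpace ℂ (Fin d)) i) with hN
  have hGfac : G = Nᴴ * N := by
    ext x y
    simp [hG, hN, Matrix.mul_apply, Matrix.conjTranspose_apply, PiLp.inner_apply,
      RCLike.inner_apply, mul_comm]
  have hrankG : G.rank ≤ d := by
    rw [hGfac]
    calc (Nᴴ * N).rank ≤ Nᴴ.rank := Matrix.rank_mul_le_left _ _
      _ = N.rank := Matrix.rank_conjTranspose _
      _ ≤ Fintype.card (Fin d) := Matrix.rank_le_card_height _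
      _ = d := Fintype.card_fin d
  -- B = G + Gᵀ
  have hoff : ∀ x y : V, x ≠ y → G x y + G y x = 2 * (α.re : ℂ) := by
    intro x y hxy
    have hxyv : (x : EuclideanSpace ℂ (Fin d)) ≠ (y : EuclideanSpace ℂ (Fin d)) :=
      fun h => hxy (Subtype.ext h)
    have hmem : (inner ℂ (x : EuclideanSpace ℂ (Fin d)) (y : EuclideanSpace ℂ (Fin d)) : ℂ) ∈
        ({α, (starRingEnd ℂ) α} : Set ℂ) := by
      have hmem0 : (inner ℂ (x : EuclideanSpace ℂ (Fin d)) (y : EuclideanSpace ℂ (Fin d)) : ℂ) ∈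
          {z : ℂ | ∃ a ∈ X, ∃ b ∈ X, a ≠ b ∧ (inner ℂ a b : ℂ) = z} :=
        ⟨(x : EuclideanSpace ℂ (Fin d)), x.2, (y : EuclideanSpace ℂ (Fin d)), y.2, hxyv, rfl⟩
      exact hset ▸ hmem0
    have hconj : G y x = (starRingEnd ℂ) (G x y) :=
      (inner_conj_symm (𝕜 := ℂ) (y : EuclideanSpace ℂ (Fin d))
        (x : EuclideanSpace ℂ (Fin d))).symm
    have hGxy : G x y = (inner ℂ (x : EuclideanSpace ℂ (Fin d)) (y : EuclideanSpace ℂ (Fin d)) : ℂ) := rfl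
    rcases hmem with h | h <;>
      [rw [hGxy, h] at hconj ⊢; rw [hGxy, h] at hconj ⊢] <;>
      · rw [hconj]
        simp [Complex.ext_iff]
        ring
  have hdiag : ∀ x : V, G x x = 1 := by
    intro x
    have h1 : G x x = (inner ℂ (x : EuclideanSpace ℂ (Fin d)) (x : EuclideanSpace ℂ (Fin d)) : ℂ) := rfl
    rw [h1, inner_self_eq_norm_sq_to_K, hnorm x x.2]
    norm_num
  have hB : G + Gᵀ = ((2 : ℂ) - 2 * α.re) • (1 : Matrix V V ℂ) +
      (2 * (α.re : ℂ)) • Matrix.of (fun _ _ => (1 : ℂ)) := by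
    ext x y
    by_cases h : x = y
    · subst h
      simp [Matrix.add_apply, Matrix.transpose_apply, hdiag x, Matrix.smul_apply,
        Matrix.one_apply]
      ring
    · simp [Matrix.add_apply, Matrix.transpose_apply, Matrix.smul_apply,
        Matrix.one_apply, h, hoff x y h]
  -- kernel of B is at most 1-dimensional
  haveI : Nonempty V := by
    rw [← Fintype.card_pos_iff, hcard]; omega
  have hker : LinearMap.ker (G + Gᵀ).mulVecLin ≤ ℂ ∙ (fun _ => 1 : V → ℂ) := by
    intro v hv
    have hv' : (G + Gᵀ) *ᵥ v = 0 := hv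
    rw [hB] at hv'
    have hcomp : ∀ x : V, ((2 : ℂ) - 2 * α.re) * v x + (2 * (α.re:ℂ)) * (∑ y, v y) = 0 := by
      intro x
      have hx := congrFun hv' x
      rw [Matrix.add_mulVec] at hx
      simp only [Pi.add_apply, Pi.zero_apply] at hx
      have h1 : ((((2 : ℂ) - 2 * α.re) • (1 : Matrix V V ℂ)) *ᵥ v) x
          = ((2 : ℂ) - 2 * α.re) * v x := by
        simp [Matrix.smul_mulVec]
      have h2 : (((2 * (α.re:ℂ)) • (Matrix.of (fun _ _ => (1:ℂ)) : Matrix V V ℂ)) *ᵥ v) x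
          = (2 * (α.re:ℂ)) * (∑ y, v y) := by
        rw [Matrix.smul_mulVec]
        simp [Matrix.mulVec, dotProduct]
      rw [h1, h2] at hx
      exact hx
    have hcne : ((2 : ℂ) - 2 * α.re) ≠ 0 := by
      intro h
      apply hre
      have := congrArg Complex.re h
      simp at this
      linarith
    obtain ⟨x₁⟩ := ‹Nonempty V›
    have hconst : ∀ x : V, v x = v x₁ := by
      intro x
      have h1 := hcomp x
      have h2 := hcomp x₁
      have : ((2 : ℂ) - 2 * α.re) * (v x - v x₁) = 0 := by linear_combination h1 - h2
      rcases mul_eq_zero.mp this with h | h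
      · exact absurd h hcne
      · exact sub_eq_zero.mp h
    rw [Submodule.mem_span_singleton]
    exact ⟨v x₁, funext fun x => by simp [hconst x]⟩
  have hkerdim : Module.finrank ℂ (LinearMap.ker (G + Gᵀ).mulVecLin) ≤ 1 := by
    calc Module.finrank ℂ (LinearMap.ker (G + Gᵀ).mulVecLin)
        ≤ Module.finrank ℂ (ℂ ∙ (fun _ => 1 : V → ℂ)) := Submodule.finrank_mono hker
      _ ≤ 1 := finrank_span_le_card _ |>.trans (by simp)
  -- rank-nullity
  have hrn := LinearMap.finrank_range_add_finrank_ker (G + Gᵀ).mulVecLin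
  have hdim : Module.finrank ℂ (V → ℂ) = X.card := by
    simp [hcard]
  have hrankB : (G + Gᵀ).rank ≤ 2 * d := by
    calc (G + Gᵀ).rank ≤ G.rank + Gᵀ.rank := matrix_rank_add_le' _ _
      _ = G.rank + G.rank := by rw [Matrix.rank_transpose]
      _ ≤ d + d := by omega
      _ = 2 * d := by ring
  have : X.card = (G + Gᵀ).rank + Module.finrank ℂ (LinearMap.ker (G + Gᵀ).mulVecLin) := by
    rw [← hdim, ← hrn]; rfl
  omega

/-- a complex spherical 2-code in `Ω(d)`, `d` odd, has at most `2d + 1` points. -/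
theorem twoCode_card_le_odd {d : ℕ} (hd : 0 < d) (hodd : Odd d)
    (X : Finset (EuclideanSpace ℂ (Fin d))) (α : ℂ) (hX : IsTwoCode X α) :
    X.card ≤ 2 * d + 1 := by
  obtain ⟨him, hnorm, hset⟩ := hX
  exact twoCode_main hd X α him hnorm hset
end

section
/- Let d be a positive integer and let A be the adjacency matrix of a tournament on n = 2d vertices whose Seidel matrix S = i(A − Aᵀ) has exactly the two eigenvalues −θ and θ, each with multiplicity d, for some θ > 0, where the smallest eigenvalue −θ is a main eigenvalue and has multiplicity d > 1. Then d is even and I + A − Aᵀ is a skew Hadamard matrix of order 2d. -/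
open Matrix
open scoped Classical

lemma S_sq {n : ℕ} (S : Matrix (Fin n) (Fin n) ℂ) (θ : ℝ) (hθ : θ ≠ 0)
    (hsum : eigMult S (-θ) + eigMult S θ = n) :
    S * S = ((θ : ℂ)^2) • (1 : Matrix (Fin n) (Fin n) ℂ) := by
  set T := Matrix.toEuclideanLin S with hT
  have mem₁ : ∀ v ∈ eigSp S (-θ), T v = (-(θ:ℂ)) • v := by
    intro v hv
    simp only [eigSp, LinearMap.mem_ker, LinearMap.sub_apply, LinearMap.smul_apply,
      LinearMap.id_apply, sub_eq_zero, Complex.ofReal_neg] at hv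
    exact hv
  have mem₂ : ∀ v ∈ eigSp S θ, T v = ((θ:ℂ)) • v := by
    intro v hv
    simpa only [eigSp, LinearMap.mem_ker, LinearMap.sub_apply, LinearMap.smul_apply,
      LinearMap.id_apply, sub_eq_zero] using hv
  have hdisj : Disjoint (eigSp S (-θ)) (eigSp S θ) := by
    rw [Submodule.disjoint_def]
    intro v hv₁ hv₂
    have e : ((θ:ℂ) - (-(θ:ℂ))) • v = 0 := by
      rw [sub_smul, ← mem₁ v hv₁, ← mem₂ v hv₂, sub_self]
    rcases smul_eq_zero.mp e with h | h
    · exfalso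
      apply hθ
      have : (θ:ℂ) = 0 := by linear_combination h / 2
      exact_mod_cast this
    · exact h
  have htop : eigSp S (-θ) ⊔ eigSp S θ = ⊤ := by
    apply Submodule.eq_top_of_disjoint _ _ _ hdisj
    rw [finrank_euclideanSpace_fin]
    exact le_of_eq hsum.symm
  set L : EuclideanSpace ℂ (Fin n) →ₗ[ℂ] EuclideanSpace ℂ (Fin n) :=
    T ∘ₗ T - ((θ:ℂ)^2) • LinearMap.id with hLdef
  have hK₁ : eigSp S (-θ) ≤ LinearMap.ker L := by
    intro v hv
    simp only [LinearMap.mem_ker, hLdef, LinearMap.sub_apply, LinearMap.comp_apply,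
      LinearMap.smul_apply, LinearMap.id_apply, sub_eq_zero]
    rw [mem₁ v hv, _root_.map_smul, mem₁ v hv, smul_smul]
    ring_nf
  have hK₂ : eigSp S θ ≤ LinearMap.ker L := by
    intro v hv
    simp only [LinearMap.mem_ker, hLdef, LinearMap.sub_apply, LinearMap.comp_apply,
      LinearMap.smul_apply, LinearMap.id_apply, sub_eq_zero]
    rw [mem₂ v hv, _root_.map_smul, mem₂ v hv, smul_smul]
    ring_nf
  have hL : L = 0 := by
    rw [← LinearMap.ker_eq_top]
    exact top_unique (htop ▸ sup_le hK₁ hK₂)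
  have hTT : T ∘ₗ T = ((θ:ℂ)^2) • LinearMap.id := by
    have := sub_eq_zero.mp (by rw [← hLdef, hL] : T ∘ₗ T - ((θ:ℂ)^2) • LinearMap.id = 0)
    exact this
  apply Matrix.toEuclideanLin.injective
  rw [_root_.map_smul]
  have h1 : Matrix.toEuclideanLin (S * S) = T ∘ₗ T := by
    rw [hT, Matrix.toEuclideanLin_eq_toLin]
    exact Matrix.toLin_mul _ _ _ S S
  have h2 : Matrix.toEuclideanLin (1 : Matrix (Fin n) (Fin n) ℂ) = LinearMap.id := by
    rw [Matrix.toEuclideanLin_eq_toLin]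
    exact Matrix.toLin_one _
  rw [h1, h2, hTT]

set_option maxHeartbeats 1000000 in
/-- a tournament on `n = 2d` vertices whose Seidel matrix has exactly the
two eigenvalues `−θ, θ` (`θ > 0`), each of multiplicity `d`, with `−θ` a main eigenvalue
and `d > 1`, forces `d` even and `I + A − Aᵀ` a skew Hadamard matrix of order `2d`. -/
theorem type_two_skewHadamard {d : ℕ} (hd : 1 < d)
    (A : Matrix (Fin (2 * d)) (Fin (2 * d)) ℂ) (hA : IsTournament A)
    (S : Matrix (Fin (2 * d)) (Fin (2 * d)) ℂ) (hS : S = Complex.I • (A - Aᵀ))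
    (θ : ℝ) (hθ : 0 < θ)
    (heig : ∀ μ : ℝ, eigSp S μ ≠ ⊥ ↔ (μ = -θ ∨ μ = θ))
    (hm1 : eigMult S (-θ) = d) (hm2 : eigMult S θ = d)
    (hβ1 : mainAngle S (-θ) ≠ 0) :
    Even d ∧ IsSkewHadamard ((1 : Matrix (Fin (2 * d)) (Fin (2 * d)) ℂ) + A - Aᵀ) := by
  -- entry facts
  have hdiag : ∀ i, A i i = 0 := by
    intro i
    have h := congrFun (congrFun hA.2 i) i
    simp only [Matrix.add_apply, Matrix.transpose_apply, Matrix.of_apply, Matrix.sub_apply,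
      Matrix.one_apply_eq] at h
    linear_combination h / 2
  have hpm : ∀ i j, i ≠ j → A i j - A j i = 1 ∨ A i j - A j i = -1 := by
    intro i j hij
    have h := congrFun (congrFun hA.2 i) j
    simp only [Matrix.add_apply, Matrix.transpose_apply, Matrix.of_apply, Matrix.sub_apply,
      Matrix.one_apply_ne hij, sub_zero] at h
    rcases hA.1 i j with h1 | h1 <;> rcases hA.1 j i with h2 | h2 <;>
      rw [h1, h2] at h ⊢ <;> (norm_num at h) <;> norm_num
  -- S squared
  have hSS : S * S = ((θ : ℂ)^2) • (1 : Matrix (Fin (2*d)) (Fin (2*d)) ℂ) :=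
    S_sq S θ (ne_of_gt hθ) (by rw [hm1, hm2]; ring)
  set M : Matrix (Fin (2*d)) (Fin (2*d)) ℂ := A - Aᵀ with hMdef
  have hMT : Mᵀ = -M := by
    rw [hMdef, transpose_sub, transpose_transpose]
    abel
  have hMM : M * M = (-((θ:ℂ)^2)) • (1 : Matrix (Fin (2*d)) (Fin (2*d)) ℂ) := by
    have : S * S = -(M * M) := by
      rw [hS, Matrix.smul_mul, Matrix.mul_smul, smul_smul, Complex.I_mul_I, neg_one_smul]
    rw [this] at hSS
    rw [neg_smul, ← hSS, neg_neg]
  -- entries of M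
  have hMd : ∀ i, M i i = 0 := by
    intro i; simp [hMdef]
  have hMo : ∀ i j, i ≠ j → M i j = 1 ∨ M i j = -1 := by
    intro i j hij
    simpa [hMdef] using hpm i j hij
  -- value of θ²
  have i0 : Fin (2*d) := ⟨0, by omega⟩
  have hθ2 : ((θ:ℂ)^2) = 2*d - 1 := by
    have h := congrFun (congrFun hMM i0) i0
    rw [Matrix.mul_apply] at h
    have hsum : ∀ j, M i0 j * M j i0 = -((1:ℂ) - if j = i0 then 1 else 0) := by
      intro j
      by_cases hji : j = i0
      · subst hji; simp [hMd]
      · have h1 : M j i0 = -M i0 j := by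
          have h2 := congrFun (congrFun hMT j) i0
          simp only [Matrix.transpose_apply, Matrix.neg_apply] at h2
          linear_combination h2
        rw [h1]
        rcases hMo i0 j (fun e => hji e.symm) with h2 | h2 <;> rw [h2] <;>
          simp [hji] <;> ring
    rw [Finset.sum_congr rfl (fun j _ => hsum j)] at h
    simp only [Finset.sum_neg_distrib, Finset.sum_sub_distrib, Finset.sum_const,
      Finset.card_univ, Fintype.card_fin, Finset.sum_ite_eq', Finset.mem_univ, if_true,
      nsmul_eq_mul, mul_one, Matrix.smul_apply, Matrix.one_apply_eq, smul_eq_mul] at h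
    -- h : -((2*d : ℂ) - 1) = -θ² * 1
    have := h
    push_cast at this ⊢
    linear_combination this
  -- the matrix H
  have hHeq : (1 : Matrix (Fin (2*d)) (Fin (2*d)) ℂ) + A - Aᵀ = 1 + M := by
    rw [hMdef]; abel
  rw [hHeq]
  set H := (1 : Matrix (Fin (2*d)) (Fin (2*d)) ℂ) + M with hHdef
  have hent : ∀ i j, H i j = 1 ∨ H i j = -1 := by
    intro i j
    by_cases hij : i = j
    · subst hij; left; simp [hHdef, hMd]
    · have : H i j = M i j := by simp [hHdef, Matrix.one_apply_ne hij]
      rw [this]; exact hMo i j hij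
  have hskew : H + Hᵀ = (2:ℂ) • (1 : Matrix (Fin (2*d)) (Fin (2*d)) ℂ) := by
    rw [hHdef, transpose_add, transpose_one, hMT, two_smul]
    abel
  have hHH : H * Hᵀ = ((Fintype.card (Fin (2*d)) : ℂ)) • (1 : Matrix (Fin (2*d)) (Fin (2*d)) ℂ) := by
    rw [hHdef, transpose_add, transpose_one, hMT]
    have expand : (1 + M) * (1 + -M) = 1 - M * M := by
      noncomm_ring
    rw [expand, hMM, Fintype.card_fin]
    ext i j
    simp only [Matrix.sub_apply, Matrix.smul_apply, Matrix.one_apply, smul_eq_mul]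
    by_cases hij : i = j <;> simp [hij, hθ2] <;> push_cast <;> ring
  refine ⟨?_, hent, hskew, hHH⟩
  -- evenness
  clear_value M H
  clear hHdef hMdef hMT hMM hMd hMo hS hSS hθ2 hHeq
  set a : Fin (2*d) := ⟨0, by omega⟩ with ha
  set b : Fin (2*d) := ⟨1, by omega⟩ with hb
  set c : Fin (2*d) := ⟨2, by omega⟩ with hc
  have hab : a ≠ b := by simp [ha, hb, Fin.ext_iff]
  have hac : a ≠ c := by simp [ha, hc, Fin.ext_iff]
  have hba : b ≠ a := by simp [ha, hb, Fin.ext_iff]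
  have hbc : b ≠ c := by simp [hb, hc, Fin.ext_iff]
  have horth : ∀ x y : Fin (2*d), x ≠ y → ∑ j, H x j * H y j = 0 := by
    intro x y hxy
    have h := congrFun (congrFun hHH x) y
    rw [Matrix.mul_apply] at h
    simpa [Matrix.transpose_apply, Matrix.smul_apply, Matrix.one_apply, hxy] using h
  have hself : ∑ j, H a j * H a j = ((2*d : ℕ) : ℂ) := by
    have h := congrFun (congrFun hHH a) a
    rw [Matrix.mul_apply] at h
    simpa [Matrix.transpose_apply, Matrix.smul_apply, Matrix.one_apply,
      Fintype.card_fin] using h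
  obtain ⟨f, hf⟩ : ∃ f : Fin (2*d) → ℂ,
      ∀ j, f j = (H a j + H b j) * (H a j + H c j) := ⟨_, fun _ => rfl⟩
  have hsumf : ∑ j, f j = ((2*d : ℕ) : ℂ) := by
    have expand : ∀ j, f j =
        H a j * H a j + H a j * H c j + (H b j * H a j + H b j * H c j) := by
      intro j; rw [hf]; ring
    rw [Finset.sum_congr rfl fun j _ => expand j, Finset.sum_add_distrib,
      Finset.sum_add_distrib, Finset.sum_add_distrib, hself,
      horth a c hac, horth b a hba, horth b c hbc]
    ring
  have hval : ∀ j, f j = 0 ∨ f j = 4 := by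
    intro j
    rcases hent a j with h1 | h1 <;> rcases hent b j with h2 | h2 <;>
      rcases hent c j with h3 | h3 <;> rw [hf] <;> rw [h1, h2, h3] <;> norm_num
  obtain ⟨k, hk⟩ : ∃ k : ℕ, k = (Finset.univ.filter (fun j => f j = 4)).card := ⟨_, rfl⟩
  have hsplit : ∑ j, f j = ((k * 4 : ℕ) : ℂ) := by
    have e1 : ∑ j, f j = ∑ j, (if f j = 4 then (4:ℂ) else 0) := by
      apply Finset.sum_congr rfl
      intro j _
      rcases hval j with h | h
      · rw [h, if_neg (by norm_num)]
      · rw [h, if_pos rfl]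
    rw [e1, ← Finset.sum_filter, Finset.sum_const, ← hk, nsmul_eq_mul]
    push_cast
    ring
  have hnat : k * 4 = 2 * d := by
    have := hsplit.symm.trans hsumf
    exact_mod_cast this
  exact ⟨k, by omega⟩
end

section
/- Let d be an even positive integer and let X be a complex spherical 2-code in Ω(d). Then |X| ≤ 2d. -/
open Matrix
open scoped Classical

lemma tournament_core {V : Type*} [Fintype V] [DecidableEq V] {d : ℕ}
    (hd : 0 < d) (heven : Even d) (A : Matrix V V ℂ) (α : ℂ)
    (hb : α.im ≠ 0) (habs : ‖α‖ ≤ 1)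
    (h01 : ∀ x y, A x y = 0 ∨ A x y = 1)
    (hdiag : ∀ x, A x x = 0)
    (htour : ∀ x y : V, x ≠ y → A x y + A y x = 1)
    (B : Matrix (Fin d) V ℂ)
    (hGram : Bᴴ * B = 1 + α • A + (starRingEnd ℂ) α • Aᵀ) :
    Fintype.card V ≤ 2 * d := by
  by_contra hcon
  push_neg at hcon
  set n := Fintype.card V with hn
  set ᾱ := (starRingEnd ℂ) α with hᾱ
  set G : Matrix V V ℂ := 1 + α • A + ᾱ • Aᵀ with hG
  set J : Matrix V V ℂ := Matrix.of (fun _ _ => (1:ℂ)) with hJdef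
  have hβ : α - ᾱ ≠ 0 := by
    simp [hᾱ, Complex.sub_conj, hb, Complex.I_ne_zero, Complex.ofReal_eq_zero]
  -- α + ᾱ ≠ 2
  have hτ : α + ᾱ ≠ 2 := by
    intro h
    have hre : α.re = 1 := by
      have := congrArg Complex.re h
      simp [hᾱ, Complex.add_re, Complex.conj_re] at this
      linarith
    have : ‖α‖ ^ 2 ≤ 1 := by nlinarith [norm_nonneg α]
    rw [Complex.sq_norm, Complex.normSq_apply, hre] at this
    nlinarith [sq_pos_of_ne_zero hb]
  -- transpose of G
  have hGT : Gᵀ = 1 + α • Aᵀ + ᾱ • A := by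
    rw [hG]; simp [Matrix.transpose_add, Matrix.transpose_smul]
  -- rank bounds
  have hrankG : G.rank ≤ d := by
    rw [← hGram]
    exact le_trans (Matrix.rank_mul_le_right _ _)
      (le_trans (Matrix.rank_le_card_height B) (by simp))
  have hrankGT : Gᵀ.rank ≤ d := by rw [Matrix.rank_transpose]; exact hrankG
  
  -- rank-nullity
  have hrnull : ∀ M : Matrix V V ℂ, M.rank + Module.finrank ℂ (LinearMap.ker M.mulVecLin) = n := by
    intro M
    rw [Matrix.rank, LinearMap.finrank_range_add_finrank_ker]
    exact Module.finrank_pi ℂ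
  set τ := α + ᾱ with hτdef
  have hτ2 : (2:ℂ) - τ ≠ 0 := by
    intro h
    exact hτ (by linear_combination -h)
  -- entries of G + Gᵀ
  have hGGTe : ∀ x y, (G + Gᵀ) x y = τ + (if x = y then (2 - τ) else 0) := by
    intro x y
    rw [hG, hGT]
    by_cases h : x = y
    · subst h
      simp [Matrix.add_apply, Matrix.smul_apply, Matrix.one_apply, Matrix.transpose_apply,
        hdiag x]
      ring
    · simp [Matrix.add_apply, Matrix.smul_apply, Matrix.one_apply, Matrix.transpose_apply, h,
        Ne.symm h]
      have := htour x y h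
      ring_nf
      linear_combination (α + ᾱ) * this
  -- kernel of G + Gᵀ consists of constant vectors
  have hconst : ∀ v : V → ℂ, (G + Gᵀ) *ᵥ v = 0 → ∀ x y, v x = v y := by
    intro v hv x y
    have key : ∀ x, (2 - τ) * v x = -(τ * ∑ z, v z) := by
      intro x
      have hx := congrFun hv x
      rw [Matrix.mulVec, dotProduct] at hx
      have expand : ∀ z ∈ Finset.univ, (G + Gᵀ) x z * v z
          = τ * v z + (if x = z then (2 - τ) * v z else 0) := by
        intro z _
        rw [hGGTe x z]
        by_cases h : x = z <;> simp [h] <;> ring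
      rw [Finset.sum_congr rfl expand, Finset.sum_add_distrib, Finset.sum_ite_eq,
        ← Finset.mul_sum] at hx
      simp at hx
      linear_combination hx
    have := (key x).trans (key y).symm
    exact mul_left_cancel₀ hτ2 this
  -- the two kernels
  set K := LinearMap.ker G.mulVecLin with hKdef
  set L := LinearMap.ker Gᵀ.mulVecLin with hLdef
  have hfK : G.rank + Module.finrank ℂ K = n := hrnull G
  have hfL : Gᵀ.rank + Module.finrank ℂ L = n := hrnull Gᵀ
  have hKLne : K ⊓ L ≠ ⊥ := by
    intro h
    have h1 := Submodule.finrank_sup_add_finrank_inf_eq K L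
    rw [h] at h1
    have h2 : Module.finrank ℂ ↥(K ⊔ L) ≤ n := by
      have := Submodule.finrank_le (K ⊔ L)
      rwa [Module.finrank_pi ℂ] at this
    simp [finrank_bot] at h1
    omega
  obtain ⟨v, hvKL, hv0⟩ := (Submodule.ne_bot_iff _).1 hKLne
  have hvK : G *ᵥ v = 0 := by
    have := (Submodule.mem_inf.1 hvKL).1
    rwa [hKdef, LinearMap.mem_ker, Matrix.mulVecLin_apply] at this
  have hvL : Gᵀ *ᵥ v = 0 := by
    have := (Submodule.mem_inf.1 hvKL).2
    rwa [hLdef, LinearMap.mem_ker, Matrix.mulVecLin_apply] at this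
  have hvsum : (G + Gᵀ) *ᵥ v = 0 := by rw [Matrix.add_mulVec, hvK, hvL]; simp
  have hvc := hconst v hvsum
  have hV : Nonempty V := by
    rw [← Fintype.card_pos_iff, ← hn]; omega
  obtain ⟨x₀⟩ := hV
  have ht0 : v x₀ ≠ 0 := by
    intro h
    apply hv0
    funext z
    rw [hvc z x₀, h]; rfl
  have honemem : (fun _ => (1:ℂ)) ∈ K ⊓ L := by
    have : (fun _ => (1:ℂ)) = (v x₀)⁻¹ • v := by
      funext z
      simp [hvc z x₀, inv_mul_cancel₀ ht0]
    rw [this]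
    exact Submodule.smul_mem _ _ hvKL
  have h1K : G *ᵥ (fun _ => (1:ℂ)) = 0 := by
    have := (Submodule.mem_inf.1 honemem).1
    rwa [hKdef, LinearMap.mem_ker, Matrix.mulVecLin_apply] at this
  have h1L : Gᵀ *ᵥ (fun _ => (1:ℂ)) = 0 := by
    have := (Submodule.mem_inf.1 honemem).2
    rwa [hLdef, LinearMap.mem_ker, Matrix.mulVecLin_apply] at this
  -- row and column sums
  set s : ℂ := ((n:ℂ) - 1)/2 with hsdef
  have hGe : ∀ x y, G x y = (if x = y then 1 else 0) + α * A x y + ᾱ * A y x := by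
    intro x y
    rw [hG]
    simp [Matrix.add_apply, Matrix.smul_apply, Matrix.one_apply, Matrix.transpose_apply]
  have hsums : ∀ x : V, (∑ y, A x y) = s ∧ (∑ y, A y x) = s := by
    intro x
    have e1 : 1 + α * (∑ y, A x y) + ᾱ * (∑ y, A y x) = 0 := by
      have hx := congrFun h1K x
      rw [Matrix.mulVec, dotProduct] at hx
      simp only [mul_one] at hx
      rw [Finset.sum_congr rfl (fun y _ => hGe x y), Finset.sum_add_distrib,
        Finset.sum_add_distrib, Finset.sum_ite_eq, ← Finset.mul_sum, ← Finset.mul_sum] at hx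
      simpa using hx
    have e2 : 1 + α * (∑ y, A y x) + ᾱ * (∑ y, A x y) = 0 := by
      have hx := congrFun h1L x
      rw [Matrix.mulVec, dotProduct] at hx
      simp only [mul_one] at hx
      have hGTe : ∀ y, Gᵀ x y = (if x = y then 1 else 0) + α * A y x + ᾱ * A x y := by
        intro y
        rw [Matrix.transpose_apply, hGe y x]
        by_cases h : x = y
        · subst h; simp
        · simp [h, Ne.symm h]
      rw [Finset.sum_congr rfl (fun y _ => hGTe y), Finset.sum_add_distrib,
        Finset.sum_add_distrib, Finset.sum_ite_eq, ← Finset.mul_sum, ← Finset.mul_sum] at hx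
      simpa using hx
    have hRC : (∑ y, A x y) + (∑ y, A y x) = (n:ℂ) - 1 := by
      have hterm : ∀ y ∈ Finset.univ, A x y + A y x = (1:ℂ) - (if x = y then 1 else 0) := by
        intro y _
        by_cases h : x = y
        · subst h; simp [hdiag x]
        · simp [h, htour x y h]
      rw [← Finset.sum_add_distrib, Finset.sum_congr rfl hterm, Finset.sum_sub_distrib,
        Finset.sum_ite_eq, Finset.sum_const, Finset.card_univ]
      simp [hn]
    have heq : (∑ y, A x y) = (∑ y, A y x) := by
      have h0 : (α - ᾱ) * ((∑ y, A x y) - (∑ y, A y x)) = 0 := by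
        linear_combination e1 - e2
      rcases mul_eq_zero.1 h0 with h | h
      · exact absurd h hβ
      · exact sub_eq_zero.1 h
    constructor
    · rw [hsdef]; linear_combination (hRC + heq)/2
    · rw [hsdef]; linear_combination (hRC - heq)/2
  
  -- kernel of G + Gᵀ has dimension ≤ 1
  have hone0 : (fun _ => (1:ℂ)) ≠ (0 : V → ℂ) := by
    intro h
    have := congrFun h x₀
    simp at this
  have hkerGGT : Module.finrank ℂ (LinearMap.ker (G+Gᵀ).mulVecLin) ≤ 1 := by
    have hsub : LinearMap.ker (G+Gᵀ).mulVecLin ≤ Submodule.span ℂ {(fun _ => (1:ℂ) : V → ℂ)} := by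
      intro w hw
      rw [LinearMap.mem_ker, Matrix.mulVecLin_apply] at hw
      have hwc := hconst w hw
      have hwe : w = (w x₀) • (fun _ => (1:ℂ)) := by
        funext z
        simp [hwc z x₀]
      rw [hwe]
      exact Submodule.smul_mem _ _ (Submodule.mem_span_singleton_self _)
    exact le_trans (Submodule.finrank_mono hsub) (le_of_eq (finrank_span_singleton hone0))
  have hrank_sum_le : (G+Gᵀ).rank ≤ G.rank + Gᵀ.rank := by
    rw [Matrix.rank, Matrix.rank, Matrix.rank, Matrix.mulVecLin_add]
    refine le_trans (Submodule.finrank_mono ?_) (Submodule.finrank_add_le_finrank_add_finrank _ _)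
    rintro _ ⟨w, rfl⟩
    exact Submodule.mem_sup.2 ⟨G.mulVecLin w, ⟨w, rfl⟩, Gᵀ.mulVecLin w, ⟨w, rfl⟩, rfl⟩
  have hn21 : n = 2*d + 1 := by
    have := hrnull (G+Gᵀ)
    omega
  -- K ⊔ L is everything
  have hKLsub : K ⊓ L ≤ LinearMap.ker (G+Gᵀ).mulVecLin := by
    intro w hw
    rw [LinearMap.mem_ker, Matrix.mulVecLin_apply, Matrix.add_mulVec]
    have h1 := (Submodule.mem_inf.1 hw).1
    have h2 := (Submodule.mem_inf.1 hw).2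
    rw [hKdef, LinearMap.mem_ker, Matrix.mulVecLin_apply] at h1
    rw [hLdef, LinearMap.mem_ker, Matrix.mulVecLin_apply] at h2
    rw [h1, h2]
    simp
  have hsupeq : K ⊔ L = ⊤ := by
    apply Submodule.eq_top_of_finrank_eq
    rw [Module.finrank_pi ℂ]
    have h1 := Submodule.finrank_sup_add_finrank_inf_eq K L
    have h2 : Module.finrank ℂ ↥(K ⊓ L) ≤ 1 :=
      le_trans (Submodule.finrank_mono hKLsub) hkerGGT
    have h3 : Module.finrank ℂ ↥(K ⊔ L) ≤ n := by
      have := Submodule.finrank_le (K ⊔ L)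
      rwa [Module.finrank_pi ℂ] at this
    omega
  -- J identities
  have hAJ : A * J = s • J := by
    ext x y
    rw [Matrix.mul_apply, Matrix.smul_apply]
    simp only [hJdef, Matrix.of_apply, mul_one, smul_eq_mul]
    exact (hsums x).1
  have hJA : J * A = s • J := by
    ext x y
    rw [Matrix.mul_apply, Matrix.smul_apply]
    simp only [hJdef, Matrix.of_apply, one_mul, smul_eq_mul, mul_one]
    exact (hsums y).2
  have hJJ : J * J = (n:ℂ) • J := by
    ext x y
    rw [Matrix.mul_apply, Matrix.smul_apply]
    simp [hJdef, hn]
  have hATe : ∀ z y, A z y = 1 - (if z = y then 1 else 0) - A y z := by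
    intro z y
    by_cases h : z = y
    · subst h; simp [hdiag]
    · simp only [h, if_neg h]
      simp only [if_false]
      linear_combination htour z y h
  have hAT : Aᵀ = J - 1 - A := by
    ext x y
    rw [Matrix.transpose_apply]
    simp only [Matrix.sub_apply, Matrix.one_apply, hJdef, Matrix.of_apply]
    rw [hATe y x]
    by_cases h : x = y
    · subst h; simp
    · simp [h, Ne.symm h]
  -- multiplication in the (1, A, J) "basis"
  have hmulJ : ∀ p q r p' q' r' : ℂ,
      (p • (1:Matrix V V ℂ) + q • A + r • J) * (p' • 1 + q' • A + r' • J)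
      = (p*p') • 1 + (p*q' + q*p') • A + (q*q') • (A*A)
        + (p*r' + r*p' + q*r'*s + r*q'*s + r*r'*(n:ℂ)) • J := by
    intro p q r p' q' r'
    simp only [Matrix.add_mul, Matrix.mul_add, Matrix.smul_mul, Matrix.mul_smul,
      Matrix.one_mul, Matrix.mul_one, hAJ, hJA, hJJ, smul_smul]
    module
  have hGJ : G = (1 - ᾱ) • 1 + (α - ᾱ) • A + ᾱ • J := by
    rw [hG, hAT]
    module
  have hGTJ : Gᵀ = (1 - α) • 1 + (ᾱ - α) • A + α • J := by
    rw [hGT, hAT]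
    module
  have hcomm : G * Gᵀ = Gᵀ * G := by
    rw [hGTJ, hGJ, hmulJ, hmulJ]
    module
  -- G * Gᵀ = 0
  have hann : G * Gᵀ = 0 := by
    have hker : ∀ w, (G * Gᵀ) *ᵥ w = 0 := by
      intro w
      have hw : w ∈ K ⊔ L := hsupeq ▸ Submodule.mem_top
      obtain ⟨u, hu, z, hz, rfl⟩ := Submodule.mem_sup.1 hw
      rw [hKdef, LinearMap.mem_ker, Matrix.mulVecLin_apply] at hu
      rw [hLdef, LinearMap.mem_ker, Matrix.mulVecLin_apply] at hz
      rw [Matrix.mulVec_add]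
      have t1 : (G * Gᵀ) *ᵥ u = 0 := by
        rw [hcomm, ← Matrix.mulVec_mulVec, hu, Matrix.mulVec_zero]
      have t2 : (G * Gᵀ) *ᵥ z = 0 := by
        rw [← Matrix.mulVec_mulVec, hz, Matrix.mulVec_zero]
      rw [t1, t2]
      simp
    ext x y
    have h0 := congrFun (hker (Pi.single y 1)) x
    simpa [Matrix.mulVec_single] using h0
  
  -- extract the combinatorial identity
  set β2 := (α - ᾱ) * (ᾱ - α) with hβ2def
  have hβ2 : β2 ≠ 0 := by
    rw [hβ2def]
    intro h
    rcases mul_eq_zero.1 h with h | h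
    · exact hβ h
    · exact hβ (by linear_combination -h)
  obtain ⟨c1, c4, key⟩ : ∃ c1 c4 : ℂ,
      (0:Matrix V V ℂ) = c1 • 1 + β2 • A + β2 • (A*A) + c4 • J :=
    ⟨(1-ᾱ)*(1-α), (1-ᾱ)*α + ᾱ*(1-α) + (α-ᾱ)*α*s + ᾱ*(ᾱ-α)*s + ᾱ*α*(n:ℂ), by
      rw [← hann, hGTJ, hGJ, hmulJ, hβ2def]
      module⟩
  have ev : ∀ x y, (0:ℂ) = c1 * (if x = y then 1 else 0) + β2 * A x y
      + β2 * (A*A) x y + c4 := by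
    intro x y
    have h0 := congrFun (congrFun key x) y
    simpa [Matrix.add_apply, Matrix.smul_apply, Matrix.one_apply, hJdef] using h0
  have hT : ∀ x y, (A*A) x y = s - A x y - ∑ z, A x z * A y z := by
    intro x y
    rw [Matrix.mul_apply]
    have hterm : ∀ z ∈ Finset.univ, A x z * A z y
        = A x z - A x z * (if z = y then 1 else 0) - A x z * A y z := by
      intro z _
      rw [hATe z y]
      ring
    have h2 : ∑ z, A x z * (if z = y then (1:ℂ) else 0) = A x y := by
      simp [mul_ite, mul_one, mul_zero]
    rw [Finset.sum_congr rfl hterm, Finset.sum_sub_distrib, Finset.sum_sub_distrib,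
      (hsums x).1, h2]
  have hTdiag : ∀ x, (∑ z, A x z * A x z) = s := by
    intro x
    have hterm : ∀ z ∈ Finset.univ, A x z * A x z = A x z := by
      intro z _
      rcases h01 x z with h | h <;> rw [h] <;> ring
    rw [Finset.sum_congr rfl hterm, (hsums x).1]
  have hTrow : ∀ x, (∑ y, ∑ z, A x z * A y z) = s * s := by
    intro x
    rw [Finset.sum_comm]
    have hterm : ∀ z ∈ Finset.univ, (∑ y, A x z * A y z) = A x z * s := by
      intro z _
      rw [← Finset.mul_sum, (hsums z).2]
    rw [Finset.sum_congr rfl hterm, ← Finset.sum_mul, (hsums x).1]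
  obtain ⟨x₁, y₁, hxy⟩ : ∃ a b : V, a ≠ b := by
    apply Fintype.exists_pair_of_one_lt_card
    rw [← hn]; omega
  obtain ⟨m, hm⟩ : ∃ m : ℕ, (∑ z, A x₁ z * A y₁ z) = (m:ℂ) := by
    refine ⟨(Finset.univ.filter (fun z => A x₁ z = 1 ∧ A y₁ z = 1)).card, ?_⟩
    rw [← Finset.sum_boole]
    apply Finset.sum_congr rfl
    intro z _
    rcases h01 x₁ z with h | h <;> rcases h01 y₁ z with h' | h' <;> simp [h, h']
  have e_diag : c1 + c4 = 0 := by
    have h0 := ev x₁ x₁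
    rw [hT x₁ x₁, hdiag x₁, hTdiag x₁] at h0
    simp at h0
    linear_combination -h0
  have e_off : (0:ℂ) = β2 * A x₁ y₁ + β2 * (s - A x₁ y₁ - m) + c4 := by
    have h0 := ev x₁ y₁
    rw [hT x₁ y₁, hm] at h0
    simpa [hxy] using h0
  have e_row : (0:ℂ) = c1 + β2 * s + β2 * ((n:ℂ) * s - s - s * s) + (n:ℂ) * c4 := by
    have h0 : (0:ℂ) = ∑ y, (c1 * (if x₁ = y then (1:ℂ) else 0) + β2 * A x₁ y
        + β2 * (A*A) x₁ y + c4) := by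
      calc (0:ℂ) = ∑ _y : V, (0:ℂ) := by simp
        _ = _ := Finset.sum_congr rfl (fun y _ => ev x₁ y)
    rw [Finset.sum_add_distrib, Finset.sum_add_distrib, Finset.sum_add_distrib] at h0
    have s1 : ∑ y, c1 * (if x₁ = y then (1:ℂ) else 0) = c1 := by simp
    have s2 : ∑ y, β2 * A x₁ y = β2 * s := by rw [← Finset.mul_sum, (hsums x₁).1]
    have s3 : ∑ y, β2 * (A*A) x₁ y = β2 * ((n:ℂ) * s - s - s * s) := by
      rw [← Finset.mul_sum]
      congr 1
      rw [Finset.sum_congr rfl (fun y _ => hT x₁ y), Finset.sum_sub_distrib,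
        Finset.sum_sub_distrib, Finset.sum_const, Finset.card_univ, (hsums x₁).1, hTrow x₁]
      rw [← hn]
      simp [nsmul_eq_mul]
    have s4 : ∑ _y : V, c4 = (n:ℂ) * c4 := by
      rw [Finset.sum_const, Finset.card_univ, ← hn, nsmul_eq_mul]
    rw [s1, s2, s3, s4] at h0
    exact h0
  have hs_d : s = (d:ℂ) := by rw [hsdef, hn21]; push_cast; ring
  have hnc : (n:ℂ) = 2*(d:ℂ) + 1 := by rw [hn21]; push_cast; ring
  rw [hs_d] at e_off e_row
  rw [hnc] at e_row
  have hfin : β2 * ((d:ℂ) * ((d:ℂ) - 1 - 2*(m:ℂ))) = 0 := by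
    linear_combination e_diag - 2*(d:ℂ)*e_off + e_row
  have hd0 : (d:ℂ) ≠ 0 := Nat.cast_ne_zero.2 hd.ne'
  have hdm : (d:ℂ) = 2*(m:ℂ) + 1 := by
    rcases mul_eq_zero.1 hfin with h | h
    · exact absurd h hβ2
    rcases mul_eq_zero.1 h with h | h
    · exact absurd h hd0
    · linear_combination h
  have : d = 2*m + 1 := by exact_mod_cast hdm
  obtain ⟨k, hk⟩ := heven
  omega

/-- a complex spherical 2-code in `Ω(d)`, `d` even, has at most `2d` points. -/
theorem twoCode_card_le_even {d : ℕ} (hd : 0 < d) (heven : Even d)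
    (X : Finset (EuclideanSpace ℂ (Fin d))) (α : ℂ) (hX : IsTwoCode X α) :
    X.card ≤ 2 * d := by
  obtain ⟨hb, hnorm, hset⟩ := hX
  set A := codeAdj X α with hA
  have hconjne : (starRingEnd ℂ) α ≠ α := by
    intro h
    exact hb ((Complex.conj_eq_iff_im).1 h)
  have hmem : ∀ x y : {x // x ∈ X}, (x: EuclideanSpace ℂ (Fin d)) ≠ (y: EuclideanSpace ℂ (Fin d)) →
      (inner ℂ (x: EuclideanSpace ℂ (Fin d)) (y: EuclideanSpace ℂ (Fin d)) : ℂ) = α ∨ (inner ℂ (x: EuclideanSpace ℂ (Fin d)) (y: EuclideanSpace ℂ (Fin d)) : ℂ) = (starRingEnd ℂ) α := by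
    intro x y hne
    have hin : (inner ℂ (x: EuclideanSpace ℂ (Fin d)) (y: EuclideanSpace ℂ (Fin d)) : ℂ) ∈
        {z : ℂ | ∃ a ∈ X, ∃ b ∈ X, a ≠ b ∧ (inner ℂ a b : ℂ) = z} :=
      ⟨x, x.2, y, y.2, hne, rfl⟩
    rw [hset] at hin
    rcases hin with h | h
    · exact Or.inl h
    · exact Or.inr h
  have hinner_symm : ∀ x y : {x // x ∈ X},
      (inner ℂ (y: EuclideanSpace ℂ (Fin d)) (x: EuclideanSpace ℂ (Fin d)) : ℂ) = (starRingEnd ℂ) (inner ℂ (x: EuclideanSpace ℂ (Fin d)) (y: EuclideanSpace ℂ (Fin d)) : ℂ) := by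
    intro x y
    rw [← inner_conj_symm]
  have hA1 : ∀ x y : {x // x ∈ X}, (x: EuclideanSpace ℂ (Fin d)) ≠ (y: EuclideanSpace ℂ (Fin d)) → (inner ℂ (x: EuclideanSpace ℂ (Fin d)) (y: EuclideanSpace ℂ (Fin d)) : ℂ) = α →
      A x y = 1 := by
    intro x y hne hin
    rw [hA]
    simp only [codeAdj, Matrix.of_apply]
    rw [if_pos ⟨hne, hin⟩]
  have hA0 : ∀ x y : {x // x ∈ X}, ¬((x: EuclideanSpace ℂ (Fin d)) ≠ (y: EuclideanSpace ℂ (Fin d)) ∧ (inner ℂ (x: EuclideanSpace ℂ (Fin d)) (y: EuclideanSpace ℂ (Fin d)) : ℂ) = α) →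
      A x y = 0 := by
    intro x y hcond
    rw [hA]
    simp only [codeAdj, Matrix.of_apply]
    rw [if_neg hcond]
  have h01 : ∀ x y : {x // x ∈ X}, A x y = 0 ∨ A x y = 1 := by
    intro x y
    by_cases h : (x: EuclideanSpace ℂ (Fin d)) ≠ (y: EuclideanSpace ℂ (Fin d)) ∧ (inner ℂ (x: EuclideanSpace ℂ (Fin d)) (y: EuclideanSpace ℂ (Fin d)) : ℂ) = α
    · exact Or.inr (by rw [hA]; simp only [codeAdj, Matrix.of_apply]; rw [if_pos h])
    · exact Or.inl (hA0 x y h)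
  have hdiag : ∀ x : {x // x ∈ X}, A x x = 0 := by
    intro x
    exact hA0 x x (by simp)
  have htour : ∀ x y : {x // x ∈ X}, x ≠ y → A x y + A y x = 1 := by
    intro x y hne
    have hne' : (x: EuclideanSpace ℂ (Fin d)) ≠ (y: EuclideanSpace ℂ (Fin d)) := fun h => hne (Subtype.ext h)
    rcases hmem x y hne' with h | h
    · rw [hA1 x y hne' h, hA0 y x (by
        rintro ⟨-, hc⟩
        rw [hinner_symm x y, h] at hc
        exact hconjne hc)]
      ring
    · rw [hA0 x y (by rintro ⟨-, hc⟩; rw [h] at hc; exact hconjne hc),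
        hA1 y x hne'.symm (by rw [hinner_symm x y, h]; simp)]
      ring
  have habs : ‖α‖ ≤ 1 := by
    have hα : α ∈ ({α, (starRingEnd ℂ) α} : Set ℂ) := Set.mem_insert _ _
    rw [← hset] at hα
    obtain ⟨a, ha, b, hb', hab, hin⟩ := hα
    rw [← hin]
    have := norm_inner_le_norm (𝕜 := ℂ) a b
    rw [hnorm a ha, hnorm b hb'] at this
    simpa using this
  have hGram : (Matrix.of fun (i : Fin d) (x : {x // x ∈ X}) => ((x: EuclideanSpace ℂ (Fin d)) i))ᴴ
      * (Matrix.of fun (i : Fin d) (x : {x // x ∈ X}) => ((x: EuclideanSpace ℂ (Fin d)) i))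
      = 1 + α • A + (starRingEnd ℂ) α • Aᵀ := by
    ext x y
    rw [Matrix.mul_apply]
    have hlhs : ∑ i, ((Matrix.of fun (i : Fin d) (x : {x // x ∈ X}) => ((x: EuclideanSpace ℂ (Fin d)) i))ᴴ x i)
        * (Matrix.of fun (i : Fin d) (x : {x // x ∈ X}) => ((x: EuclideanSpace ℂ (Fin d)) i)) i y
        = (inner ℂ (x: EuclideanSpace ℂ (Fin d)) (y: EuclideanSpace ℂ (Fin d)) : ℂ) := by
      rw [PiLp.inner_apply]
      apply Finset.sum_congr rfl
      intro i _
      simp [Matrix.conjTranspose_apply, mul_comm]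
    rw [hlhs]
    by_cases hxy : x = y
    · subst hxy
      rw [Matrix.add_apply, Matrix.add_apply, Matrix.smul_apply, Matrix.smul_apply,
        Matrix.one_apply_eq, Matrix.transpose_apply, hdiag x]
      rw [inner_self_eq_norm_sq_to_K, hnorm x x.2]
      simp
    · have hne' : (x: EuclideanSpace ℂ (Fin d)) ≠ (y: EuclideanSpace ℂ (Fin d)) := fun h => hxy (Subtype.ext h)
      rw [Matrix.add_apply, Matrix.add_apply, Matrix.smul_apply, Matrix.smul_apply,
        Matrix.one_apply_ne hxy, Matrix.transpose_apply]
      rcases hmem x y hne' with h | h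
      · rw [h, hA1 x y hne' h, hA0 y x (by
          rintro ⟨-, hc⟩
          rw [hinner_symm x y, h] at hc
          exact hconjne hc)]
        simp
      · rw [h, hA0 x y (by rintro ⟨-, hc⟩; rw [h] at hc; exact hconjne hc),
          hA1 y x hne'.symm (by rw [hinner_symm x y, h]; simp)]
        simp
  have := tournament_core hd heven A α hb habs h01 hdiag htour _ hGram
  rwa [Fintype.card_coe] at this
end

section
/- Let A_1 and A_2 be adjacency matrices of doubly regular tournaments on d vertices, and let A be the 2d×2d block matrix with blocks A_1 and A_2 on the diagonal, the all-ones matrix J in the upper-right block, and the zero matrix in the lower-left block. Then A is the adjacency matrix of a tournament on 2d vertices whose Seidel matrix S = i(A − Aᵀ) satisfies: S² equals the 2×2 block-diagonal matrix with both diagonal blocks equal to dI + (d−1)J of size d. -/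
open Matrix
open scoped Classical

section Aux
variable {d : ℕ} {A : Matrix (Fin d) (Fin d) ℂ}

local notation "JM" => (Matrix.of (fun _ _ => (1 : ℂ)) : Matrix (Fin d) (Fin d) ℂ)

lemma drt_rowsum (h : IsDoublyRegular A) (i : Fin d) :
    ∑ k, A i k = ((d : ℂ) - 1) / 2 := by
  have := congrFun h.2.1 i
  simpa [Matrix.mulVec, dotProduct] using this

lemma drt_colsum (h : IsDoublyRegular A) (j : Fin d) :
    ∑ k, A k j = ((d : ℂ) - 1) / 2 := by
  have hsum : ∑ k, (A k j + A j k) = (d : ℂ) - 1 := by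
    have he : ∀ k, A k j + A j k = 1 - (1 : Matrix (Fin d) (Fin d) ℂ) k j := by
      intro k
      have := congrFun (congrFun h.1.2 k) j
      simpa using this
    rw [Finset.sum_congr rfl (fun k _ => he k), Finset.sum_sub_distrib]
    simp [Matrix.one_apply]
  rw [Finset.sum_add_distrib, drt_rowsum h j] at hsum
  have : ∑ k, A k j = ((d : ℂ) - 1) - ((d : ℂ) - 1) / 2 := by linear_combination hsum
  rw [this]; ring

lemma drt_mul_J (h : IsDoublyRegular A) :
    A * JM = (((d : ℂ) - 1) / 2) • JM := by
  ext i j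
  simp [Matrix.mul_apply, drt_rowsum h i]

lemma drt_J_mul (h : IsDoublyRegular A) :
    JM * A = (((d : ℂ) - 1) / 2) • JM := by
  ext i j
  simp [Matrix.mul_apply, drt_colsum h j]

lemma drt_t_mul_J (h : IsDoublyRegular A) :
    Aᵀ * JM = (((d : ℂ) - 1) / 2) • JM := by
  ext i j
  simp [Matrix.mul_apply, Matrix.transpose_apply, drt_colsum h i]

lemma drt_J_mul_t (h : IsDoublyRegular A) :
    JM * Aᵀ = (((d : ℂ) - 1) / 2) • JM := by
  ext i j
  simp [Matrix.mul_apply, Matrix.transpose_apply, drt_rowsum h j]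

lemma drt_skew_mul_J (h : IsDoublyRegular A) : (A - Aᵀ) * JM = 0 := by
  rw [Matrix.sub_mul, drt_mul_J h, drt_t_mul_J h, sub_self]

lemma drt_J_mul_skew (h : IsDoublyRegular A) : JM * (A - Aᵀ) = 0 := by
  rw [Matrix.mul_sub, drt_J_mul h, drt_J_mul_t h, sub_self]

lemma J_mul_J : JM * JM = (d : ℂ) • JM := by
  ext i j
  simp [Matrix.mul_apply]

lemma drt_skew_sq (h : IsDoublyRegular A) :
    (A - Aᵀ) * (A - Aᵀ) = JM - (d : ℂ) • 1 := by
  have hAt : Aᵀ = JM - 1 - A := by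
    rw [← h.1.2]; abel
  have hAJ := drt_mul_J h
  have hJA := drt_J_mul h
  have hJJ : JM * JM = (d : ℂ) • JM := J_mul_J
  have hAA : A * A = (((d : ℂ) + 1) / 4) • JM - A - (((d : ℂ) + 1) / 4) • 1 := by
    have hprod := h.2.2
    rw [Fintype.card_fin] at hprod
    rw [hAt, mul_sub, mul_sub, mul_one, hAJ] at hprod
    have h2 : A * A = (((d : ℂ) - 1) / 2) • JM - A -
        ((((d : ℂ) + 1) / 4) • 1 + (((d : ℂ) - 3) / 4) • JM) := by
      rw [← hprod]; abel
    rw [h2]; module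
  rw [hAt]
  have hB : A - (JM - 1 - A) = (2 : ℂ) • A + (1 - JM) := by module
  rw [hB]
  simp only [add_mul, mul_add, sub_mul, mul_sub, one_mul, mul_one,
    smul_mul_assoc, mul_smul_comm]
  rw [hAA, hAJ, hJA, hJJ]
  module

end Aux


/-- gluing two doubly regular tournaments `A₁, A₂` on `d` vertices as
`fromBlocks A₁ J 0 A₂` gives a tournament on `2d` vertices whose Seidel matrix `S`
satisfies `S² = diag(dI + (d−1)J, dI + (d−1)J)`. -/
theorem doublyRegular_glue_seidel_square {d : ℕ}
    (A₁ A₂ : Matrix (Fin d) (Fin d) ℂ)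
    (h₁ : IsDoublyRegular A₁) (h₂ : IsDoublyRegular A₂)
    (A : Matrix (Fin d ⊕ Fin d) (Fin d ⊕ Fin d) ℂ)
    (hA : A = Matrix.fromBlocks A₁ (Matrix.of (fun _ _ => (1 : ℂ))) 0 A₂) :
    IsTournament A ∧
    (Complex.I • (A - Aᵀ)) ^ 2 = Matrix.fromBlocks
      ((d : ℂ) • 1 + ((d : ℂ) - 1) • Matrix.of (fun _ _ => (1 : ℂ))) 0 0
      ((d : ℂ) • 1 + ((d : ℂ) - 1) • Matrix.of (fun _ _ => (1 : ℂ))) := by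
  subst hA
  have e₁ : ∀ i j, A₁ i j + A₁ j i = 1 - (if i = j then (1 : ℂ) else 0) := by
    intro i j
    have := congrFun (congrFun h₁.1.2 i) j
    simpa [Matrix.one_apply] using this
  have e₂ : ∀ i j, A₂ i j + A₂ j i = 1 - (if i = j then (1 : ℂ) else 0) := by
    intro i j
    have := congrFun (congrFun h₂.1.2 i) j
    simpa [Matrix.one_apply] using this
  constructor
  · constructor
    · rintro (i | i) (j | j) <;>
        simp only [Matrix.fromBlocks_apply₁₁, Matrix.fromBlocks_apply₁₂,
          Matrix.fromBlocks_apply₂₁, Matrix.fromBlocks_apply₂₂, Matrix.of_apply,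
          Matrix.zero_apply] <;>
        first
          | exact h₁.1.1 i j
          | exact h₂.1.1 i j
          | norm_num
    · ext (i | i) (j | j) <;>
        simp only [Matrix.add_apply, Matrix.sub_apply, Matrix.transpose_apply,
          Matrix.fromBlocks_apply₁₁, Matrix.fromBlocks_apply₁₂,
          Matrix.fromBlocks_apply₂₁, Matrix.fromBlocks_apply₂₂, Matrix.of_apply,
          Matrix.zero_apply, Matrix.one_apply, Sum.inl.injEq, Sum.inr.injEq,
          reduceCtorEq, if_false] <;>
        first
          | exact e₁ i j
          | exact e₂ i j
          | norm_num
  · have hJt : (Matrix.of (fun _ _ => (1 : ℂ)) : Matrix (Fin d) (Fin d) ℂ)ᵀ =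
        Matrix.of (fun _ _ => (1 : ℂ)) := by
      ext i j; rfl
    have hBt : (Matrix.fromBlocks A₁ (Matrix.of (fun _ _ => (1 : ℂ))) 0 A₂)ᵀ =
        Matrix.fromBlocks A₁ᵀ 0 (Matrix.of (fun _ _ => (1 : ℂ))) A₂ᵀ := by
      rw [Matrix.fromBlocks_transpose, hJt, Matrix.transpose_zero]
    have hSub : Matrix.fromBlocks A₁ (Matrix.of (fun _ _ => (1 : ℂ))) 0 A₂ -
        Matrix.fromBlocks A₁ᵀ 0 (Matrix.of (fun _ _ => (1 : ℂ))) A₂ᵀ =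
        Matrix.fromBlocks (A₁ - A₁ᵀ) (Matrix.of (fun _ _ => (1 : ℂ)))
          (-(Matrix.of (fun _ _ => (1 : ℂ)))) (A₂ - A₂ᵀ) := by
      ext (i | i) (j | j) <;>
        simp [Matrix.sub_apply, Matrix.fromBlocks_apply₁₁, Matrix.fromBlocks_apply₁₂,
          Matrix.fromBlocks_apply₂₁, Matrix.fromBlocks_apply₂₂]
    rw [hBt, hSub, sq, smul_mul_assoc, mul_smul_comm, smul_smul, Complex.I_mul_I,
      Matrix.fromBlocks_multiply]
    simp only [Matrix.neg_mul, Matrix.mul_neg,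
      drt_skew_sq h₁, drt_skew_sq h₂, drt_skew_mul_J h₁, drt_skew_mul_J h₂,
      drt_J_mul_skew h₁, drt_J_mul_skew h₂, J_mul_J, add_zero, zero_add, neg_zero]
    rw [neg_one_smul]
    ext (i | i) (j | j) <;>
      simp only [Matrix.fromBlocks_apply₁₁, Matrix.fromBlocks_apply₁₂,
        Matrix.fromBlocks_apply₂₁, Matrix.fromBlocks_apply₂₂, Matrix.neg_apply,
        Matrix.add_apply, Matrix.sub_apply, Matrix.smul_apply, Matrix.one_apply,
        Matrix.of_apply, Matrix.zero_apply, smul_eq_mul] <;>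
      first | (split_ifs <;> ring) | norm_num
end
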